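/- arXiv:1805.09586 — 10 statements merged into one kernel-verified Lean document; each statement's English description precedes it below -/
import Mathlib

section
/- Let d⁺ = ((d₁⁺,v₁),…,(dₙ⁺,vₙ)) be an outdegree-vertex sequence, let W be a proper subset of V = {v₁,…,vₙ}, and let G_W be an oriented graph on V in which every vertex of W has its prescribed outdegree and every vertex outside W has outdegree 0, such that d⁺ is G_W-normal. Suppose that for some index i the vertex vᵢ ∈ V \ W has dᵢ⁺ > 0. Then d⁺ has a realization G satisfying N⁺_G(v) = N⁺_{G_W}(v) for every v ∈ W if and only if d⁺ has a realization H satisfying both N⁺_H(v) = N⁺_{G_W}(v) for every v ∈ W and N⁺_H(vᵢ) = L_{G_W}(vᵢ), where L_{G_W}(vᵢ) is the leftmost possible out-neighbourhood of vᵢ. -/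
/-- An oriented graph on `Fin m`: no loops and at most one of the two possible
directed edges between any two vertices. -/
def IsOriented {m : ℕ} (R : Fin m → Fin m → Bool) : Prop :=
  ∀ i j, R i j = true → R j i = false

/-- The outdegree of vertex `i` in the directed graph `R`. -/
def outDeg {m : ℕ} (R : Fin m → Fin m → Bool) (i : Fin m) : ℕ :=
  (Finset.univ.filter (fun j => R i j = true)).card

/-- The indegree of vertex `i` in the directed graph `R`. -/
def inDeg {m : ℕ} (R : Fin m → Fin m → Bool) (i : Fin m) : ℕ :=
  (Finset.univ.filter (fun j => R j i = true)).card

/-- The set of out-neighbours of vertex `i` in the directed graph `R`. -/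
def outNbrs {m : ℕ} (R : Fin m → Fin m → Bool) (i : Fin m) : Finset (Fin m) :=
  Finset.univ.filter (fun j => R i j = true)
/-- `R` is a realization of the outdegree-vertex sequence `d`: an oriented graph
in which every vertex `i` has outdegree `d i`. -/
def IsRealization {m : ℕ} (d : Fin m → ℕ) (R : Fin m → Fin m → Bool) : Prop :=
  IsOriented R ∧ ∀ i, outDeg R i = d i

/-- The OVS `d` is `G_W`-normal: the first `|W|` entries of the sequence are exactly
the vertices of `W`, and past `W` the values `d i + d⁻_{G_W}(i)` are sorted, with ties
broken by `d i ≤ d (i+1)`. (Vertices are identified with their position in the sequence.) -/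
def IsGWNormal {m : ℕ} (d : Fin m → ℕ) (W : Finset (Fin m)) (GW : Fin m → Fin m → Bool) : Prop :=
  (∀ i : Fin m, (i : ℕ) < W.card → i ∈ W) ∧
  (∀ i j : Fin m, W.card ≤ (i : ℕ) → (i : ℕ) + 1 = (j : ℕ) →
    (d i + inDeg GW i < d j + inDeg GW j ∨
      (d i + inDeg GW i = d j + inDeg GW j ∧ d i ≤ d j)))

/-- `A` is a possible out-neighbourhood (PON) of `i`: a set of `d i` vertices avoiding
`i` itself and the in-neighbours of `i` in `G_W`. -/
def IsPON {m : ℕ} (d : Fin m → ℕ) (GW : Fin m → Fin m → Bool) (i : Fin m)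
    (A : Finset (Fin m)) : Prop :=
  A.card = d i ∧ ∀ a ∈ A, a ≠ i ∧ GW a i = false

/-- `L` is the leftmost PON of `i`: the PON consisting of the `d i` admissible vertices
occurring earliest in the sequence. -/
def IsLeftmostPON {m : ℕ} (d : Fin m → ℕ) (GW : Fin m → Fin m → Bool) (i : Fin m)
    (L : Finset (Fin m)) : Prop :=
  IsPON d GW i L ∧ ∀ a ∈ L, ∀ b : Fin m, b ≠ i → GW b i = false → b ∉ L → a < b

section Aux

variable {m : ℕ}

lemma mem_outNbrs {R : Fin m → Fin m → Bool} {u v : Fin m} :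
    v ∈ outNbrs R u ↔ R u v = true := by simp [outNbrs]

lemma outDeg_eq_card_outNbrs (R : Fin m → Fin m → Bool) (u : Fin m) :
    outDeg R u = (outNbrs R u).card := rfl

lemma bool_false_of_not_true {x : Bool} (h : ¬ x = true) : x = false := by
  cases x
  · rfl
  · exact absurd rfl h

/-- vertices outside `W` have no `GW`-out-edges -/
lemma gw0 {d : Fin m → ℕ} {W : Finset (Fin m)} {GW : Fin m → Fin m → Bool}
    (hGWdeg : ∀ v : Fin m, outDeg GW v = if v ∈ W then d v else 0)
    {v : Fin m} (hv : v ∉ W) (u : Fin m) : GW v u = false := by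
  have h0 : outDeg GW v = 0 := by rw [hGWdeg v, if_neg hv]
  have he : (Finset.univ.filter (fun j => GW v j = true)) = ∅ := Finset.card_eq_zero.mp h0
  apply bool_false_of_not_true
  intro h
  have hu : u ∈ (Finset.univ.filter (fun j => GW v j = true)) := by simp [h]
  rw [he] at hu
  simp at hu

lemma mono_of_normal {d : Fin m → ℕ} {W : Finset (Fin m)} {GW : Fin m → Fin m → Bool}
    (hn : IsGWNormal d W GW) {p q : Fin m} (h1 : W.card ≤ (p : ℕ)) (h2 : (p : ℕ) ≤ (q : ℕ)) :
    d p + inDeg GW p ≤ d q + inDeg GW q := by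
  have key : ∀ k : ℕ, ∀ q : Fin m, (q : ℕ) = (p : ℕ) + k →
      d p + inDeg GW p ≤ d q + inDeg GW q := by
    intro k
    induction k with
    | zero =>
      intro q hq
      have hpq : p = q := Fin.ext (by omega)
      rw [← hpq]
    | succ k ih =>
      intro q hq
      have hlt : (p : ℕ) + k < m := by have := q.isLt; omega
      have h3 := ih ⟨(p : ℕ) + k, hlt⟩ rfl
      have h4 := hn.2 ⟨(p : ℕ) + k, hlt⟩ q (by simp; omega) (by simp; omega)
      simp only [inDeg] at h3 h4 ⊢
      rcases h4 with h | ⟨h, _⟩ <;> omega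
  exact key ((q : ℕ) - (p : ℕ)) q (by omega)

/-- Generic "move": for each vertex `u`, optionally swap one out-edge
(`σ u = some (p, q)` means: delete `u→p`, add `u→q`). -/
def moveFn (R : Fin m → Fin m → Bool) (σ : Fin m → Option (Fin m × Fin m)) :
    Fin m → Fin m → Bool := fun u v =>
  match σ u with
  | none => R u v
  | some pq => if v = pq.1 then false else if v = pq.2 then true else R u v

lemma move_spec (R : Fin m → Fin m → Bool) (hor : IsOriented R)
    (σ : Fin m → Option (Fin m × Fin m))
    (Hok : ∀ u p q, σ u = some (p, q) → R u p = true ∧ R u q = false ∧ p ≠ q)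
    (Hpair : ∀ u p q p' q', σ u = some (p, q) → σ q = some (p', q') → q' ≠ u)
    (Hold : ∀ v p' q', σ v = some (p', q') → R q' v = true →
      ∃ p q, σ q' = some (p, q) ∧ v = p) :
    IsOriented (moveFn R σ) ∧
    (∀ u, σ u = none → outNbrs (moveFn R σ) u = outNbrs R u) ∧
    (∀ u p q, σ u = some (p, q) →
      outNbrs (moveFn R σ) u = insert q ((outNbrs R u).erase p)) ∧
    (∀ u, outDeg (moveFn R σ) u = outDeg R u) := by
  have hrow_none : ∀ u v, σ u = none → moveFn R σ u v = R u v := by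
    intro u v h; simp [moveFn, h]
  have hrow_some : ∀ u p q v, σ u = some (p, q) →
      moveFn R σ u v = if v = p then false else if v = q then true else R u v := by
    intro u p q v h; simp [moveFn, h]
  have hornew : IsOriented (moveFn R σ) := by
    intro u v huv
    rcases hu : σ u with _ | ⟨p, q⟩
    · rw [hrow_none u v hu] at huv
      rcases hv : σ v with _ | ⟨p', q'⟩
      · rw [hrow_none v u hv]; exact hor u v huv
      · rw [hrow_some v p' q' u hv]
        by_cases h1 : u = p'
        · simp [h1]
        · by_cases h2 : u = q'
          · exfalso
            obtain ⟨P, Q, hPQ, _⟩ := Hold v p' q' hv (by rw [← h2]; exact huv)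
            rw [← h2, hu] at hPQ; cases hPQ
          · simp [h1, h2, hor u v huv]
    · rw [hrow_some u p q v hu] at huv
      by_cases hvp : v = p
      · rw [if_pos hvp] at huv; exact Bool.noConfusion huv
      rw [if_neg hvp] at huv
      by_cases hvq : v = q
      · -- new edge u → v (v = q)
        subst hvq
        rcases hv : σ v with _ | ⟨p'', q''⟩
        · rw [hrow_none v u hv]
          apply bool_false_of_not_true
          intro hqu
          obtain ⟨P, Q, hPQ, _⟩ := Hold u p v hu hqu
          rw [hv] at hPQ; cases hPQ
        · rw [hrow_some v p'' q'' u hv]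
          by_cases h1 : u = p''
          · simp [h1]
          · have h2 : ¬ (u = q'') := fun h => (Hpair u p v p'' q'' hu hv) h.symm
            rw [if_neg h1, if_neg h2]
            apply bool_false_of_not_true
            intro hqu
            obtain ⟨P, Q, hPQ, hP⟩ := Hold u p v hu hqu
            rw [hv] at hPQ
            obtain ⟨rfl, rfl⟩ : p'' = P ∧ q'' = Q := by simpa using hPQ
            exact h1 hP
      · -- retained edge, row u swapped
        rw [if_neg hvq] at huv
        rcases hv : σ v with _ | ⟨p', q'⟩
        · rw [hrow_none v u hv]; exact hor u v huv
        · rw [hrow_some v p' q' u hv]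
          by_cases h1 : u = p'
          · simp [h1]
          · by_cases h2 : u = q'
            · exfalso
              obtain ⟨P, Q, hPQ, hP⟩ := Hold v p' q' hv (by rw [← h2]; exact huv)
              rw [← h2, hu] at hPQ
              obtain ⟨rfl, rfl⟩ : p = P ∧ q = Q := by simpa using hPQ
              exact hvp hP
            · simp [h1, h2, hor u v huv]
  have hnone : ∀ u, σ u = none → outNbrs (moveFn R σ) u = outNbrs R u := by
    intro u h
    ext y
    simp [mem_outNbrs, hrow_none u y h]
  have hsome : ∀ u p q, σ u = some (p, q) →
      outNbrs (moveFn R σ) u = insert q ((outNbrs R u).erase p) := by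
    intro u p q h
    obtain ⟨hp, hq, hpq⟩ := Hok u p q h
    ext y
    rw [mem_outNbrs, hrow_some u p q y h]
    by_cases h1 : y = q
    · simp [h1, Ne.symm hpq]
    · by_cases h2 : y = p
      · subst h2
        simp [if_neg h1, hpq, h1, Ne.symm hpq]
      · simp [h1, h2, mem_outNbrs]
  refine ⟨hornew, hnone, hsome, ?_⟩
  intro u
  rcases hu : σ u with _ | ⟨p, q⟩
  · rw [outDeg_eq_card_outNbrs, outDeg_eq_card_outNbrs, hnone u hu]
  · obtain ⟨hp, hq, hpq⟩ := Hok u p q hu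
    rw [outDeg_eq_card_outNbrs, outDeg_eq_card_outNbrs, hsome u p q hu]
    have hqe : q ∉ (outNbrs R u).erase p := by
      intro hmem
      have := Finset.mem_of_mem_erase hmem
      rw [mem_outNbrs] at this
      rw [this] at hq; exact Bool.noConfusion hq
    rw [Finset.card_insert_of_notMem hqe,
      Finset.card_erase_of_mem (mem_outNbrs.mpr hp)]
    have : 1 ≤ (outNbrs R u).card := Finset.card_pos.mpr ⟨p, mem_outNbrs.mpr hp⟩
    omega

end Aux

section Counting

variable {m : ℕ}

/-- The final counting contradiction for the "stuck" configuration. -/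
lemma stuck_counting {R GW : Fin m → Fin m → Bool} {W : Finset (Fin m)} {d : Fin m → ℕ}
    (hor : IsOriented R) (hdeg : ∀ v, outDeg R v = d v)
    (hWfix : ∀ v ∈ W, outNbrs R v = outNbrs GW v)
    (hGWdeg : ∀ v : Fin m, outDeg GW v = if v ∈ W then d v else 0)
    {a b i : Fin m} (hiW : i ∉ W) (hRia : R i a = true) (hRib : R i b = false)
    (hfull : ∀ y, y ≠ b → R b y = true ∨ R y b = true)
    (hstuck : ∀ x, x ∉ W → R x b = true → R x a = true)
    (hmono : d b + inDeg GW b ≤ d a + inDeg GW a) : False := by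
  classical
  have hloop : ∀ v, R v v = false := by
    intro v
    apply bool_false_of_not_true
    intro h
    have h2 := hor v v h
    rw [h2] at h; exact Bool.noConfusion h
  set S := fun (t : Fin m) => Finset.univ.filter (fun u => R u t = true) with hS
  have hWin : ∀ t, ((S t).filter (fun u => u ∈ W)).card = inDeg GW t := by
    intro t
    have hset : (S t).filter (fun u => u ∈ W)
        = Finset.univ.filter (fun u => GW u t = true) := by
      ext v
      simp only [hS, Finset.mem_filter, Finset.mem_univ, true_and]
      constructor
      · rintro ⟨h1, h2⟩
        have h3 : t ∈ outNbrs GW v := by rw [← hWfix v h2]; exact mem_outNbrs.mpr h1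
        exact mem_outNbrs.mp h3
      · intro h1
        have hvW : v ∈ W := by
          by_contra hv
          rw [gw0 hGWdeg hv t] at h1; exact Bool.noConfusion h1
        have h3 : t ∈ outNbrs R v := by rw [hWfix v hvW]; exact mem_outNbrs.mpr h1
        exact ⟨mem_outNbrs.mp h3, hvW⟩
    rw [hset]; rfl
  have hsplit : ∀ t, ((S t).filter (fun u => u ∈ W)).card
      + ((S t).filter (fun u => u ∉ W)).card = (S t).card := by
    intro t
    exact Finset.card_filter_add_card_filter_not (fun u => u ∈ W)
  have hdisj : ∀ t, Disjoint (outNbrs R t) (S t) := by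
    intro t
    rw [Finset.disjoint_left]
    intro y h1 h2
    rw [mem_outNbrs] at h1
    have h2' : R y t = true := by simpa [hS] using h2
    have h3 := hor t y h1
    rw [h3] at h2'; exact Bool.noConfusion h2'
  have hni : ∀ t : Fin m, t ∉ outNbrs R t ∪ S t := by
    intro t
    simp [mem_outNbrs, hS, hloop t]
  have hcardb : 1 + (d b + (S b).card) = m := by
    have hcover : insert b (outNbrs R b ∪ S b) = Finset.univ := by
      apply Finset.eq_univ_of_forall
      intro y
      by_cases hyb : y = b
      · simp [hyb]
      · rcases hfull y hyb with h | h
        · simp [Finset.mem_insert, Finset.mem_union, mem_outNbrs, h]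
        · simp [Finset.mem_insert, Finset.mem_union, hS, h]
    have h1 := congrArg Finset.card hcover
    rw [Finset.card_insert_of_notMem (hni b), Finset.card_union_of_disjoint (hdisj b),
      ← outDeg_eq_card_outNbrs, hdeg b, Finset.card_univ, Fintype.card_fin] at h1
    omega
  have hcarda : 1 + (d a + (S a).card) ≤ m := by
    have h1 := Finset.card_le_card (Finset.subset_univ (insert a (outNbrs R a ∪ S a)))
    rw [Finset.card_insert_of_notMem (hni a), Finset.card_union_of_disjoint (hdisj a),
      ← outDeg_eq_card_outNbrs, hdeg a, Finset.card_univ, Fintype.card_fin] at h1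
    omega
  have hsub : insert i ((S b).filter (fun u => u ∉ W)) ⊆ (S a).filter (fun u => u ∉ W) := by
    intro y hy
    rcases Finset.mem_insert.mp hy with rfl | hy'
    · simp [hS, hRia, hiW]
    · simp only [hS, Finset.mem_filter, Finset.mem_univ, true_and] at hy' ⊢
      exact ⟨hstuck y hy'.2 hy'.1, hy'.2⟩
  have hini : i ∉ (S b).filter (fun u => u ∉ W) := by
    simp [hS, hRib]
  have hle := Finset.card_le_card hsub
  rw [Finset.card_insert_of_notMem hini] at hle
  have h1 := hWin a
  have h2 := hWin b
  have h3 := hsplit a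
  have h4 := hsplit b
  omega

end Counting

/-- Theorem 3.1. Let `d` be an OVS on `Fin m`, `W ⊊ V` and `G_W` an
oriented graph giving every vertex of `W` its prescribed outdegree and every other vertex
outdegree `0`, such that `d` is `G_W`-normal. Let `i ∉ W` with `d i > 0` and let `L` be
the leftmost PON of `i`. Then `d` has a realization agreeing with `G_W` on the
out-neighbourhoods of `W` iff it has one that moreover has out-neighbourhood `L` at `i`. -/
theorem ovs_leftmost_realization {m : ℕ} (d : Fin m → ℕ) (W : Finset (Fin m))
    (hW : W ⊂ Finset.univ) (GW : Fin m → Fin m → Bool) (hGWor : IsOriented GW)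
    (hGWdeg : ∀ v : Fin m, outDeg GW v = if v ∈ W then d v else 0)
    (hnormal : IsGWNormal d W GW)
    (i : Fin m) (hi : i ∉ W) (hdi : 0 < d i)
    (L : Finset (Fin m)) (hL : IsLeftmostPON d GW i L) :
    (∃ R : Fin m → Fin m → Bool, IsRealization d R ∧
        ∀ v ∈ W, outNbrs R v = outNbrs GW v) ↔
    (∃ R : Fin m → Fin m → Bool, IsRealization d R ∧
        (∀ v ∈ W, outNbrs R v = outNbrs GW v) ∧ outNbrs R i = L) := by
  constructor
  · rintro ⟨R0, hR0, hW0⟩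
    have hWm : W.card ≤ m := by
      have h := Finset.card_le_card hW.subset
      simpa using h
    have hWiff : ∀ v : Fin m, v ∈ W ↔ (v : ℕ) < W.card := by
      have hT : ((Finset.range W.card).attachFin
          (fun a ha => lt_of_lt_of_le (Finset.mem_range.mp ha) hWm)) = W := by
        apply Finset.eq_of_subset_of_card_le
        · intro v hv
          exact hnormal.1 v (by simpa [Finset.mem_attachFin] using hv)
        · rw [Finset.card_attachFin, Finset.card_range]
      intro v
      rw [← hT]
      simp [Finset.mem_attachFin]
    have key : ∀ n : ℕ, ∀ R : Fin m → Fin m → Bool,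
        (∑ x ∈ outNbrs R i, (x : ℕ)) = n → IsRealization d R →
        (∀ v ∈ W, outNbrs R v = outNbrs GW v) →
        ∃ H : Fin m → Fin m → Bool, IsRealization d H ∧
          (∀ v ∈ W, outNbrs H v = outNbrs GW v) ∧ outNbrs H i = L := by
      intro n
      induction n using Nat.strong_induction_on with
      | _ n IH =>
        intro R hΦ hReal hWfix
        by_cases heq : outNbrs R i = L
        · exact ⟨R, hReal, hWfix, heq⟩
        have hor := hReal.1
        have hloop : ∀ v, R v v = false := by
          intro v
          apply bool_false_of_not_true
          intro h
          have h2 := hor v v h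
          rw [h2] at h; exact Bool.noConfusion h
        have hcardL : (outNbrs R i).card = L.card := by
          rw [← outDeg_eq_card_outNbrs, hReal.2 i, hL.1.1]
        have hCne : ¬ (outNbrs R i ⊆ L) := by
          intro hsub
          exact heq (Finset.eq_of_subset_of_card_le hsub (le_of_eq hcardL.symm))
        obtain ⟨a, haS, haL⟩ := Finset.not_subset.mp hCne
        have hBne : ¬ (L ⊆ outNbrs R i) := by
          intro hsub
          exact heq ((Finset.eq_of_subset_of_card_le hsub (le_of_eq hcardL)).symm)
        obtain ⟨b, hbL, hbS⟩ := Finset.not_subset.mp hBne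
        have hadm : ∀ x ∈ outNbrs R i, x ≠ i ∧ GW x i = false := by
          intro x hx
          have hx' : R i x = true := mem_outNbrs.mp hx
          constructor
          · rintro rfl
            rw [hloop] at hx'; exact Bool.noConfusion hx'
          · by_cases hxW : x ∈ W
            · apply bool_false_of_not_true
              intro hGW
              have h2 : R x i = false := hor i x hx'
              have h3 : i ∈ outNbrs R x := by rw [hWfix x hxW]; exact mem_outNbrs.mpr hGW
              rw [mem_outNbrs, h2] at h3; exact Bool.noConfusion h3
            · exact gw0 hGWdeg hxW i
        have hblt : ∀ c ∈ outNbrs R i, c ∉ L → (b : ℕ) < (c : ℕ) := by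
          intro c h1 h2
          exact hL.2 b hbL c (hadm c h1).1 (hadm c h1).2 h2
        have hbi_ne : b ≠ i := (hL.1.2 b hbL).1
        have hRia : R i a = true := mem_outNbrs.mp haS
        have hRib : R i b = false := by
          apply bool_false_of_not_true
          intro h; exact hbS (mem_outNbrs.mpr h)
        have hba : (b : ℕ) < (a : ℕ) := hblt a haS haL
        have hab : a ≠ b := fun h => by rw [h] at hba; omega
        have ha_ne_i : a ≠ i := (hadm a haS).1
        have finish : ∀ (σ : Fin m → Option (Fin m × Fin m)) (t : Fin m),
            t ∈ outNbrs R i → t ∉ L → σ i = some (t, b) → (∀ v ∈ W, σ v = none) →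
            (∀ u p q, σ u = some (p, q) → R u p = true ∧ R u q = false ∧ p ≠ q) →
            (∀ u p q p' q', σ u = some (p, q) → σ q = some (p', q') → q' ≠ u) →
            (∀ v p' q', σ v = some (p', q') → R q' v = true →
              ∃ p q, σ q' = some (p, q) ∧ v = p) →
            ∃ H : Fin m → Fin m → Bool, IsRealization d H ∧
              (∀ v ∈ W, outNbrs H v = outNbrs GW v) ∧ outNbrs H i = L := by
          intro σ t ht htL hσi hσW hok hpair hold
          obtain ⟨hor', hnone, hsome, hdeg'⟩ := move_spec R hor σ hok hpair hold
          have hreal' : IsRealization d (moveFn R σ) :=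
            ⟨hor', fun u => (hdeg' u).trans (hReal.2 u)⟩
          have hwfix' : ∀ v ∈ W, outNbrs (moveFn R σ) v = outNbrs GW v := by
            intro v hv; rw [hnone v (hσW v hv)]; exact hWfix v hv
          have hrow := hsome i t b hσi
          have hbnm : b ∉ (outNbrs R i).erase t := fun h => hbS (Finset.mem_of_mem_erase h)
          have hΦ' : (∑ x ∈ outNbrs (moveFn R σ) i, (x : ℕ)) < n := by
            rw [hrow, Finset.sum_insert hbnm]
            have hsum : (∑ x ∈ (outNbrs R i).erase t, (x : ℕ)) + (t : ℕ)
                = ∑ x ∈ outNbrs R i, (x : ℕ) := Finset.sum_erase_add _ _ ht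
            rw [hΦ] at hsum
            have hbt : (b : ℕ) < (t : ℕ) := hblt t ht htL
            omega
          exact IH _ hΦ' (moveFn R σ) rfl hreal' hwfix'
        by_cases hbi : R b i = true
        · -- b → i present
          have hbW : b ∉ W := by
            intro hbW
            have h3 : i ∈ outNbrs GW b := by
              rw [← hWfix b hbW]; exact mem_outNbrs.mpr hbi
            rw [mem_outNbrs, (hL.1.2 b hbL).2] at h3
            exact Bool.noConfusion h3
          have hWleb : W.card ≤ (b : ℕ) := by
            by_contra hcon
            push_neg at hcon
            exact hbW (hnormal.1 b hcon)
          have hnotW : ∀ c : Fin m, (b : ℕ) < (c : ℕ) → c ∉ W := by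
            intro c hcgt hcW
            have := (hWiff c).1 hcW
            omega
          have haW : a ∉ W := hnotW a hba
          by_cases hc2 : ∃ c ∈ outNbrs R i, c ∉ L ∧ R b c = false
          · obtain ⟨c, hcS, hcL, hbc⟩ := hc2
            have hRic : R i c = true := mem_outNbrs.mp hcS
            have hbclt : (b : ℕ) < (c : ℕ) := hblt c hcS hcL
            have hc_ne_i : c ≠ i := (hadm c hcS).1
            have hc_ne_b : c ≠ b := fun h => by rw [h] at hbclt; omega
            have hcW : c ∉ W := hnotW c hbclt
            by_cases hcb : R c b = true
            · refine finish (fun u => if u = i then some (c, b) else if u = b then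
                  some (i, c) else if u = c then some (b, i) else none) c hcS hcL ?_ ?_ ?_ ?_ ?_
              · simp
              · intro v hv
                have hv1 : v ≠ i := fun h => hi (h ▸ hv)
                have hv2 : v ≠ b := fun h => hbW (h ▸ hv)
                have hv3 : v ≠ c := fun h => hcW (h ▸ hv)
                simp [hv1, hv2, hv3]
              · intro u p q h
                by_cases h1 : u = i
                · replace h1 := h1.symm; subst h1; simp at h; obtain ⟨rfl, rfl⟩ := h
                  exact ⟨hRic, hRib, hc_ne_b⟩
                by_cases h2 : u = b
                · replace h2 := h2.symm; subst h2; simp [hbi_ne] at h; obtain ⟨rfl, rfl⟩ := h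
                  exact ⟨hbi, hbc, Ne.symm hc_ne_i⟩
                by_cases h3 : u = c
                · replace h3 := h3.symm; subst h3; simp [hc_ne_i, hc_ne_b] at h; obtain ⟨rfl, rfl⟩ := h
                  exact ⟨hcb, hor i c hRic, hbi_ne⟩
                · simp [h1, h2, h3] at h
              · intro u p q p' q' h1 h2
                by_cases hu1 : u = i
                · replace hu1 := hu1.symm; subst hu1; simp at h1; obtain ⟨rfl, rfl⟩ := h1
                  simp [hbi_ne] at h2; obtain ⟨rfl, rfl⟩ := h2
                  exact hc_ne_i
                by_cases hu2 : u = b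
                · replace hu2 := hu2.symm; subst hu2; simp [hbi_ne] at h1; obtain ⟨rfl, rfl⟩ := h1
                  simp [hc_ne_i, hc_ne_b] at h2; obtain ⟨rfl, rfl⟩ := h2
                  exact Ne.symm hbi_ne
                by_cases hu3 : u = c
                · replace hu3 := hu3.symm; subst hu3; simp [hc_ne_i, hc_ne_b] at h1; obtain ⟨rfl, rfl⟩ := h1
                  simp at h2; obtain ⟨rfl, rfl⟩ := h2
                  exact Ne.symm hc_ne_b
                · simp [hu1, hu2, hu3] at h1
              · intro v p' q' h1 h2
                by_cases hv1 : v = i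
                · replace hv1 := hv1.symm; subst hv1; simp at h1; obtain ⟨rfl, rfl⟩ := h1
                  exact ⟨i, c, by simp [hbi_ne], rfl⟩
                by_cases hv2 : v = b
                · replace hv2 := hv2.symm; subst hv2; simp [hbi_ne] at h1; obtain ⟨rfl, rfl⟩ := h1
                  exact ⟨b, i, by simp [hc_ne_i, hc_ne_b], rfl⟩
                by_cases hv3 : v = c
                · replace hv3 := hv3.symm; subst hv3; simp [hc_ne_i, hc_ne_b] at h1; obtain ⟨rfl, rfl⟩ := h1
                  exact ⟨c, b, by simp, rfl⟩
                · simp [hv1, hv2, hv3] at h1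
            · have hcbf : R c b = false := bool_false_of_not_true hcb
              refine finish (fun u => if u = i then some (c, b) else if u = b then
                  some (i, c) else none) c hcS hcL ?_ ?_ ?_ ?_ ?_
              · simp
              · intro v hv
                have hv1 : v ≠ i := fun h => hi (h ▸ hv)
                have hv2 : v ≠ b := fun h => hbW (h ▸ hv)
                simp [hv1, hv2]
              · intro u p q h
                by_cases h1 : u = i
                · replace h1 := h1.symm; subst h1; simp at h; obtain ⟨rfl, rfl⟩ := h
                  exact ⟨hRic, hRib, hc_ne_b⟩
                by_cases h2 : u = b
                · replace h2 := h2.symm; subst h2; simp [hbi_ne] at h; obtain ⟨rfl, rfl⟩ := h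
                  exact ⟨hbi, hbc, Ne.symm hc_ne_i⟩
                · simp [h1, h2] at h
              · intro u p q p' q' h1 h2
                by_cases hu1 : u = i
                · replace hu1 := hu1.symm; subst hu1; simp at h1; obtain ⟨rfl, rfl⟩ := h1
                  simp [hbi_ne] at h2; obtain ⟨rfl, rfl⟩ := h2
                  exact hc_ne_i
                by_cases hu2 : u = b
                · replace hu2 := hu2.symm; subst hu2; simp [hbi_ne] at h1; obtain ⟨rfl, rfl⟩ := h1
                  simp [hc_ne_i, hc_ne_b] at h2
                · simp [hu1, hu2] at h1
              · intro v p' q' h1 h2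
                by_cases hv1 : v = i
                · replace hv1 := hv1.symm; subst hv1; simp at h1; obtain ⟨rfl, rfl⟩ := h1
                  exact ⟨i, c, by simp [hbi_ne], rfl⟩
                by_cases hv2 : v = b
                · replace hv2 := hv2.symm; subst hv2; simp [hbi_ne] at h1; obtain ⟨rfl, rfl⟩ := h1
                  rw [hcbf] at h2; exact Bool.noConfusion h2
                · simp [hv1, hv2] at h1
          · have hball : ∀ c ∈ outNbrs R i, c ∉ L → R b c = true := by
              intro c h1 h2
              by_contra h3
              exact hc2 ⟨c, h1, h2, bool_false_of_not_true h3⟩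
            have hRba : R b a = true := hball a haS haL
            by_cases hy2 : ∃ y : Fin m, y ≠ b ∧ y ≠ i ∧ R b y = false ∧ R y b = false
            · obtain ⟨y, hy_b, hy_i, hby, hyb⟩ := hy2
              refine finish (fun u => if u = i then some (a, b) else if u = b then
                  some (i, y) else none) a haS haL ?_ ?_ ?_ ?_ ?_
              · simp
              · intro v hv
                have hv1 : v ≠ i := fun h => hi (h ▸ hv)
                have hv2 : v ≠ b := fun h => hbW (h ▸ hv)
                simp [hv1, hv2]
              · intro u p q h
                by_cases h1 : u = i
                · replace h1 := h1.symm; subst h1; simp at h; obtain ⟨rfl, rfl⟩ := h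
                  exact ⟨hRia, hRib, hab⟩
                by_cases h2 : u = b
                · replace h2 := h2.symm; subst h2; simp [hbi_ne] at h; obtain ⟨rfl, rfl⟩ := h
                  exact ⟨hbi, hby, Ne.symm hy_i⟩
                · simp [h1, h2] at h
              · intro u p q p' q' h1 h2
                by_cases hu1 : u = i
                · replace hu1 := hu1.symm; subst hu1; simp at h1; obtain ⟨rfl, rfl⟩ := h1
                  simp [hbi_ne] at h2; obtain ⟨rfl, rfl⟩ := h2
                  exact hy_i
                by_cases hu2 : u = b
                · replace hu2 := hu2.symm; subst hu2; simp [hbi_ne] at h1; obtain ⟨rfl, rfl⟩ := h1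
                  simp [hy_i, hy_b] at h2
                · simp [hu1, hu2] at h1
              · intro v p' q' h1 h2
                by_cases hv1 : v = i
                · replace hv1 := hv1.symm; subst hv1; simp at h1; obtain ⟨rfl, rfl⟩ := h1
                  exact ⟨i, y, by simp [hbi_ne], rfl⟩
                by_cases hv2 : v = b
                · replace hv2 := hv2.symm; subst hv2; simp [hbi_ne] at h1; obtain ⟨rfl, rfl⟩ := h1
                  rw [hyb] at h2; exact Bool.noConfusion h2
                · simp [hv1, hv2] at h1
            · have hfull : ∀ y : Fin m, y ≠ b → R b y = true ∨ R y b = true := by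
                intro y hyb
                by_cases hyi : y = i
                · subst hyi; left; exact hbi
                by_cases h1 : R b y = true
                · left; exact h1
                right
                by_contra h2
                exact hy2 ⟨y, hyb, hyi, bool_false_of_not_true h1, bool_false_of_not_true h2⟩
              by_cases hx4 : ∃ x : Fin m, x ∉ W ∧ R x b = true ∧ R x a = false ∧ R a x = false
              · obtain ⟨x, hxW, hxb, hxa, hax⟩ := hx4
                have hbx : R b x = false := hor x b hxb
                have hx_i : x ≠ i := fun h => by
                  rw [h, hRib] at hxb; exact Bool.noConfusion hxb
                have hx_b : x ≠ b := fun h => by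
                  rw [h, hloop b] at hxb; exact Bool.noConfusion hxb
                have hx_a : x ≠ a := fun h => by
                  rw [h, hor b a hRba] at hxb; exact Bool.noConfusion hxb
                refine finish (fun u => if u = i then some (a, b) else if u = b then
                    some (i, x) else if u = x then some (b, a) else none) a haS haL ?_ ?_ ?_ ?_ ?_
                · simp
                · intro v hv
                  have hv1 : v ≠ i := fun h => hi (h ▸ hv)
                  have hv2 : v ≠ b := fun h => hbW (h ▸ hv)
                  have hv3 : v ≠ x := fun h => hxW (h ▸ hv)
                  simp [hv1, hv2, hv3]
                · intro u p q h
                  by_cases h1 : u = i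
                  · replace h1 := h1.symm; subst h1; simp at h; obtain ⟨rfl, rfl⟩ := h
                    exact ⟨hRia, hRib, hab⟩
                  by_cases h2 : u = b
                  · replace h2 := h2.symm; subst h2; simp [hbi_ne] at h; obtain ⟨rfl, rfl⟩ := h
                    exact ⟨hbi, hbx, Ne.symm hx_i⟩
                  by_cases h3 : u = x
                  · replace h3 := h3.symm; subst h3; simp [hx_i, hx_b] at h; obtain ⟨rfl, rfl⟩ := h
                    exact ⟨hxb, hxa, Ne.symm hab⟩
                  · simp [h1, h2, h3] at h
                · intro u p q p' q' h1 h2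
                  by_cases hu1 : u = i
                  · replace hu1 := hu1.symm; subst hu1; simp at h1; obtain ⟨rfl, rfl⟩ := h1
                    simp [hbi_ne] at h2; obtain ⟨rfl, rfl⟩ := h2
                    exact hx_i
                  by_cases hu2 : u = b
                  · replace hu2 := hu2.symm; subst hu2; simp [hbi_ne] at h1; obtain ⟨rfl, rfl⟩ := h1
                    simp [hx_i, hx_b] at h2; obtain ⟨rfl, rfl⟩ := h2
                    exact hab
                  by_cases hu3 : u = x
                  · replace hu3 := hu3.symm; subst hu3; simp [hx_i, hx_b] at h1; obtain ⟨rfl, rfl⟩ := h1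
                    simp [ha_ne_i, hab, Ne.symm hx_a] at h2
                  · simp [hu1, hu2, hu3] at h1
                · intro v p' q' h1 h2
                  by_cases hv1 : v = i
                  · replace hv1 := hv1.symm; subst hv1; simp at h1; obtain ⟨rfl, rfl⟩ := h1
                    exact ⟨i, x, by simp [hbi_ne], rfl⟩
                  by_cases hv2 : v = b
                  · replace hv2 := hv2.symm; subst hv2; simp [hbi_ne] at h1; obtain ⟨rfl, rfl⟩ := h1
                    exact ⟨b, a, by simp [hx_i, hx_b], rfl⟩
                  by_cases hv3 : v = x
                  · replace hv3 := hv3.symm; subst hv3; simp [hx_i, hx_b] at h1; obtain ⟨rfl, rfl⟩ := h1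
                    rw [hax] at h2; exact Bool.noConfusion h2
                  · simp [hv1, hv2, hv3] at h1
              · by_cases hx5 : ∃ x : Fin m, x ∉ W ∧ R x b = true ∧ R a x = true
                · obtain ⟨x, hxW, hxb, hax⟩ := hx5
                  have hxa : R x a = false := hor a x hax
                  have hbx : R b x = false := hor x b hxb
                  have hRai : R a i = false := hor i a hRia
                  have hx_i : x ≠ i := fun h => by
                    rw [h, hRib] at hxb; exact Bool.noConfusion hxb
                  have hx_b : x ≠ b := fun h => by
                    rw [h, hloop b] at hxb; exact Bool.noConfusion hxb
                  have hx_a : x ≠ a := fun h => by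
                    rw [h, hloop a] at hax; exact Bool.noConfusion hax
                  refine finish (fun u => if u = i then some (a, b) else if u = a then
                      some (x, i) else if u = x then some (b, a) else if u = b then
                      some (i, x) else none) a haS haL ?_ ?_ ?_ ?_ ?_
                  · simp
                  · intro v hv
                    have hv1 : v ≠ i := fun h => hi (h ▸ hv)
                    have hv2 : v ≠ a := fun h => haW (h ▸ hv)
                    have hv3 : v ≠ x := fun h => hxW (h ▸ hv)
                    have hv4 : v ≠ b := fun h => hbW (h ▸ hv)
                    simp [hv1, hv2, hv3, hv4]
                  · intro u p q h
                    by_cases h1 : u = i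
                    · replace h1 := h1.symm; subst h1; simp at h; obtain ⟨rfl, rfl⟩ := h
                      exact ⟨hRia, hRib, hab⟩
                    by_cases h2 : u = a
                    · replace h2 := h2.symm; subst h2; simp [ha_ne_i] at h; obtain ⟨rfl, rfl⟩ := h
                      exact ⟨hax, hRai, hx_i⟩
                    by_cases h3 : u = x
                    · replace h3 := h3.symm; subst h3; simp [hx_i, hx_a] at h; obtain ⟨rfl, rfl⟩ := h
                      exact ⟨hxb, hxa, Ne.symm hab⟩
                    by_cases h4 : u = b
                    · replace h4 := h4.symm; subst h4; simp [hbi_ne, Ne.symm hab, Ne.symm hx_b] at h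
                      obtain ⟨rfl, rfl⟩ := h
                      exact ⟨hbi, hbx, Ne.symm hx_i⟩
                    · simp [h1, h2, h3, h4] at h
                  · intro u p q p' q' h1 h2
                    by_cases hu1 : u = i
                    · replace hu1 := hu1.symm; subst hu1; simp at h1; obtain ⟨rfl, rfl⟩ := h1
                      simp [hbi_ne, Ne.symm hab, Ne.symm hx_b] at h2
                      obtain ⟨rfl, rfl⟩ := h2
                      exact hx_i
                    by_cases hu2 : u = a
                    · replace hu2 := hu2.symm; subst hu2; simp [ha_ne_i] at h1; obtain ⟨rfl, rfl⟩ := h1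
                      simp at h2; obtain ⟨rfl, rfl⟩ := h2
                      exact Ne.symm hab
                    by_cases hu3 : u = x
                    · replace hu3 := hu3.symm; subst hu3; simp [hx_i, hx_a] at h1; obtain ⟨rfl, rfl⟩ := h1
                      simp [ha_ne_i] at h2; obtain ⟨rfl, rfl⟩ := h2
                      exact Ne.symm hx_i
                    by_cases hu4 : u = b
                    · replace hu4 := hu4.symm; subst hu4; simp [hbi_ne, Ne.symm hab, Ne.symm hx_b] at h1
                      obtain ⟨rfl, rfl⟩ := h1
                      simp [hx_i, hx_a] at h2; obtain ⟨rfl, rfl⟩ := h2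
                      exact hab
                    · simp [hu1, hu2, hu3, hu4] at h1
                  · intro v p' q' h1 h2
                    by_cases hv1 : v = i
                    · replace hv1 := hv1.symm; subst hv1; simp at h1; obtain ⟨rfl, rfl⟩ := h1
                      exact ⟨i, x, by simp [hbi_ne, Ne.symm hab, Ne.symm hx_b], rfl⟩
                    by_cases hv2 : v = a
                    · replace hv2 := hv2.symm; subst hv2; simp [ha_ne_i] at h1; obtain ⟨rfl, rfl⟩ := h1
                      exact ⟨a, b, by simp, rfl⟩
                    by_cases hv3 : v = x
                    · replace hv3 := hv3.symm; subst hv3; simp [hx_i, hx_a] at h1; obtain ⟨rfl, rfl⟩ := h1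
                      exact ⟨x, i, by simp [ha_ne_i], rfl⟩
                    by_cases hv4 : v = b
                    · replace hv4 := hv4.symm; subst hv4; simp [hbi_ne, Ne.symm hab, Ne.symm hx_b] at h1
                      obtain ⟨rfl, rfl⟩ := h1
                      exact ⟨b, a, by simp [hx_i, hx_a], rfl⟩
                    · simp [hv1, hv2, hv3, hv4] at h1
                · exfalso
                  have hstuck : ∀ x : Fin m, x ∉ W → R x b = true → R x a = true := by
                    intro x h1 h2
                    by_cases h3 : R x a = true
                    · exact h3
                    exfalso
                    by_cases h4 : R a x = true
                    · exact hx5 ⟨x, h1, h2, h4⟩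
                    · exact hx4 ⟨x, h1, h2, bool_false_of_not_true h3,
                        bool_false_of_not_true h4⟩
                  exact stuck_counting hor hReal.2 hWfix hGWdeg hi hRia hRib hfull hstuck
                    (mono_of_normal hnormal hWleb (le_of_lt hba))
        · -- Move 1 : simply redirect i→a to i→b
          have hbif : R b i = false := bool_false_of_not_true hbi
          refine finish (fun u => if u = i then some (a, b) else none) a haS haL ?_ ?_ ?_ ?_ ?_
          · simp
          · intro v hv
            have hv1 : v ≠ i := fun h => hi (h ▸ hv)
            simp [hv1]
          · intro u p q h
            by_cases h1 : u = i
            · replace h1 := h1.symm; subst h1; simp at h; obtain ⟨rfl, rfl⟩ := h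
              exact ⟨hRia, hRib, hab⟩
            · simp [h1] at h
          · intro u p q p' q' h1 h2
            by_cases hu1 : u = i
            · replace hu1 := hu1.symm; subst hu1; simp at h1; obtain ⟨rfl, rfl⟩ := h1
              simp [hbi_ne] at h2
            · simp [hu1] at h1
          · intro v p' q' h1 h2
            by_cases hv1 : v = i
            · replace hv1 := hv1.symm; subst hv1; simp at h1; obtain ⟨rfl, rfl⟩ := h1
              rw [hbif] at h2; exact Bool.noConfusion h2
            · simp [hv1] at h1
    exact key _ R0 rfl hR0 hW0
  · rintro ⟨R, h1, h2, _⟩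
    exact ⟨R, h1, h2⟩
end

section
/- Let d⁺ = ((d₁⁺,v₁),…,(dₙ⁺,vₙ)) be an outdegree-vertex sequence, let W be a proper subset of V = {v₁,…,vₙ}, and let G_W be an oriented graph on V in which every vertex of W has its prescribed outdegree and every vertex outside W has outdegree 0, such that d⁺ is G_W-normal. Let G be a realization of d⁺ satisfying N⁺_G(v) = N⁺_{G_W}(v) for every v ∈ W, let vᵢ ∈ V \ W with dᵢ⁺ > 0, and suppose v_j ∈ N⁺_G(vᵢ) \ L_{G_W}(vᵢ) and v_k ∈ L_{G_W}(vᵢ) \ N⁺_G(vᵢ) where v_k precedes v_j in the G_W-normal ordering (so in particular d_k⁺ + d⁻_{G_W}(v_k) ≤ d_j⁺ + d⁻_{G_W}(v_j)). Then d⁺ has a realization G′ with N⁺_{G′}(v) = N⁺_{G_W}(v) for every v ∈ W and N⁺_{G′}(vᵢ) = (N⁺_G(vᵢ) \ {v_j}) ∪ {v_k}. -/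
namespace OVSAux

variable {m : ℕ}

lemma no_loop {G : Fin m → Fin m → Bool} (h : IsOriented G) (a : Fin m) : G a a = false := by
  by_contra hne
  have ht : G a a = true := by simpa using hne
  have := h a a ht
  simp [ht] at this

def upd (G : Fin m → Fin m → Bool) (M : Finset (Fin m)) (A : Fin m → Finset (Fin m)) :
    Fin m → Fin m → Bool :=
  fun a b => if a ∈ M then decide (b ∈ A a) else G a b

lemma outNbrs_upd_mem {G : Fin m → Fin m → Bool} {M : Finset (Fin m)}
    {A : Fin m → Finset (Fin m)} {a : Fin m} (ha : a ∈ M) : outNbrs (upd G M A) a = A a := by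
  ext b; simp [outNbrs, upd, ha]

lemma outNbrs_upd_not {G : Fin m → Fin m → Bool} {M : Finset (Fin m)}
    {A : Fin m → Finset (Fin m)} {a : Fin m} (ha : a ∉ M) :
    outNbrs (upd G M A) a = outNbrs G a := by
  ext b; simp [outNbrs, upd, ha]

lemma outDeg_eq_card (R : Fin m → Fin m → Bool) (a : Fin m) :
    outDeg R a = (outNbrs R a).card := rfl

lemma oriented_upd {G : Fin m → Fin m → Bool} {M : Finset (Fin m)}
    {A : Fin m → Finset (Fin m)} (hG : IsOriented G)
    (h1 : ∀ a ∈ M, ∀ b ∈ M, b ∈ A a → a ∉ A b)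
    (h2 : ∀ a ∈ M, ∀ b ∈ A a, b ∉ M → G b a = false)
    (h3 : ∀ a, a ∉ M → ∀ b ∈ M, G a b = true → a ∉ A b) :
    IsOriented (upd G M A) := by
  intro a b hab
  by_cases haM : a ∈ M <;> by_cases hbM : b ∈ M <;> simp [upd, haM, hbM] at hab ⊢
  · exact h1 a haM b hbM hab
  · exact h2 a haM b hab hbM
  · exact h3 a haM b hbM hab
  · exact hG a b hab

lemma card_exchange {S : Finset (Fin m)} {a b : Fin m} (ha : a ∈ S) (hb : b ∉ S) :
    ((S \ {a}) ∪ {b}).card = S.card := by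
  have hb' : b ∉ S \ {a} := fun h => hb (Finset.mem_sdiff.1 h).1
  have h1 : (S \ {a}) ∪ {b} = insert b (S \ {a}) := by
    rw [Finset.union_comm]; exact (Finset.insert_eq _ _).symm
  rw [h1, Finset.card_insert_of_notMem hb', Finset.card_sdiff_of_subset (by simpa using ha)]
  have := Finset.card_pos.2 ⟨a, ha⟩
  simp only [Finset.card_singleton]
  omega

lemma exchange_upd {G : Fin m → Fin m → Bool} (hGor : IsOriented G)
    (M : Finset (Fin m)) (rem add : Fin m → Fin m)
    (H1 : ∀ v ∈ M, G v (rem v) = true)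
    (H2 : ∀ v ∈ M, G v (add v) = false)
    (H4 : ∀ v ∈ M, add v ∉ M → G (add v) v = false)
    (H5 : ∀ v ∈ M, ∀ b ∈ M, add b = v → G v b = true → b = rem v)
    (H6 : ∀ v ∈ M, add v ∈ M → (G (add v) v = true → v = rem (add v)) ∧ v ≠ add (add v)) :
    ∃ G' : Fin m → Fin m → Bool, IsOriented G' ∧
      (∀ v, outDeg G' v = outDeg G v) ∧
      (∀ v ∈ M, outNbrs G' v = (outNbrs G v \ {rem v}) ∪ {add v}) ∧
      (∀ v ∉ M, outNbrs G' v = outNbrs G v) := by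
  classical
  set A : Fin m → Finset (Fin m) := fun v => (outNbrs G v \ {rem v}) ∪ {add v} with hA
  have memA : ∀ v x, x ∈ A v ↔ ((G v x = true ∧ x ≠ rem v) ∨ x = add v) := by
    intro v x
    simp [hA, outNbrs]
    tauto
  refine ⟨upd G M A, ?_, ?_, ?_, ?_⟩
  · apply oriented_upd hGor
    · intro a ha b hb hba
      rw [memA] at hba
      rcases hba with ⟨hab, hbrem⟩ | rfl
      · rw [memA]
        rintro (⟨hba', _⟩ | hEq)
        · rw [hGor a b hab] at hba'; exact Bool.false_ne_true hba'
        · exact hbrem (H5 a ha b hb hEq.symm hab)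
      · rw [memA]
        obtain ⟨himp, hne⟩ := H6 a ha hb
        rintro (⟨h1', h2'⟩ | h')
        · exact h2' (himp h1')
        · exact hne h'
    · intro a ha b hb hbM
      rw [memA] at hb
      rcases hb with ⟨hab, _⟩ | rfl
      · exact hGor a b hab
      · exact H4 a ha hbM
    · intro a haM b hb hab
      rw [memA]
      rintro (⟨hba, _⟩ | hEq)
      · rw [hGor a b hab] at hba; exact Bool.false_ne_true hba
      · have h4 : G (add b) b = false := H4 b hb (by rwa [← hEq])
        rw [hEq, h4] at hab
        exact Bool.false_ne_true hab
  · intro v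
    by_cases hv : v ∈ M
    · rw [outDeg_eq_card, outNbrs_upd_mem hv, outDeg_eq_card]
      exact card_exchange (by simp [outNbrs, H1 v hv]) (by simp [outNbrs, H2 v hv])
    · rw [outDeg_eq_card, outNbrs_upd_not hv, outDeg_eq_card]
  · intro v hv
    rw [outNbrs_upd_mem hv]
  · intro v hv
    rw [outNbrs_upd_not hv]

end OVSAux

/-- exchange step in the proof of Theorem 3.1. Given a realization `G`
of `d` agreeing with `G_W` on `W`, a vertex `j ∈ N⁺_G(i) \ L` and a vertex
`k ∈ L \ N⁺_G(i)` with `k` preceding `j` in the `G_W`-normal ordering, there is a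
realization `G'` agreeing with `G_W` on `W` whose out-neighbourhood at `i` is
`(N⁺_G(i) \ {j}) ∪ {k}`. -/
theorem ovs_exchange {m : ℕ} (d : Fin m → ℕ) (W : Finset (Fin m))
    (hW : W ⊂ Finset.univ) (GW : Fin m → Fin m → Bool) (hGWor : IsOriented GW)
    (hGWdeg : ∀ v : Fin m, outDeg GW v = if v ∈ W then d v else 0)
    (hnormal : IsGWNormal d W GW)
    (i : Fin m) (hi : i ∉ W) (hdi : 0 < d i)
    (L : Finset (Fin m)) (hL : IsLeftmostPON d GW i L)
    (G : Fin m → Fin m → Bool) (hG : IsRealization d G)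
    (hagree : ∀ v ∈ W, outNbrs G v = outNbrs GW v)
    (j k : Fin m) (hj : j ∈ outNbrs G i \ L) (hk : k ∈ L \ outNbrs G i) (hkj : k < j) :
    ∃ G' : Fin m → Fin m → Bool, IsRealization d G' ∧
      (∀ v ∈ W, outNbrs G' v = outNbrs GW v) ∧
      outNbrs G' i = (outNbrs G i \ {j}) ∪ {k} := by
  classical
  open OVSAux in
  obtain ⟨hGor, hGdeg⟩ := hG
  obtain ⟨hjNi, hjL⟩ := Finset.mem_sdiff.1 hj
  obtain ⟨hkL, hkNi⟩ := Finset.mem_sdiff.1 hk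
  have hij : G i j = true := by simpa [outNbrs] using hjNi
  have hik : G i k = false := by simpa [outNbrs] using hkNi
  have n_ki : k ≠ i := (hL.1.2 k hkL).1
  have n_ik : i ≠ k := n_ki.symm
  have hGWki : GW k i = false := (hL.1.2 k hkL).2
  have hji : G j i = false := hGor i j hij
  have n_ji : j ≠ i := by
    intro h
    rw [h, OVSAux.no_loop hGor i] at hij
    exact Bool.false_ne_true hij
  have n_ij : i ≠ j := n_ji.symm
  have n_kj : k ≠ j := fun h => hjL (h ▸ hkL)
  have n_jk : j ≠ k := n_kj.symm
  have hagreeB : ∀ w ∈ W, ∀ x, G w x = GW w x := by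
    intro w hw x
    have h := Finset.ext_iff.1 (hagree w hw) x
    simp only [outNbrs, Finset.mem_filter, Finset.mem_univ, true_and] at h
    cases hx : G w x <;> cases hy : GW w x <;> simp_all
  have hGW0 : ∀ v, v ∉ W → ∀ x, GW v x = false := by
    intro v hv x
    have h0 : outDeg GW v = 0 := by rw [hGWdeg v, if_neg hv]
    unfold outDeg at h0
    rw [Finset.card_eq_zero] at h0
    by_contra hx
    have hx' : GW v x = true := by simpa using hx
    have hmem : x ∈ Finset.univ.filter (fun y => GW v y = true) := by simp [hx']
    rw [h0] at hmem
    simp at hmem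
  -- realization goals packaged
  by_cases hki : G k i = true
  · -- hard case: k → i present
    have hkW : k ∉ W := by
      intro hkW
      have := hagreeB k hkW i
      rw [hGWki] at this
      rw [this] at hki
      exact Bool.false_ne_true hki
    have hWcard_lt : W.card < m := by
      have := Finset.card_lt_card hW
      simpa using this
    have hWiff : ∀ v : Fin m, v ∈ W ↔ (v : ℕ) < W.card := by
      have hsub : Finset.univ.filter (fun v : Fin m => (v : ℕ) < W.card) ⊆ W := by
        intro v hv
        exact hnormal.1 v (by simpa using hv)
      have hfc : (Finset.univ.filter (fun v : Fin m => (v : ℕ) < W.card)).card = W.card := by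
        have : Finset.univ.filter (fun v : Fin m => (v : ℕ) < W.card)
            = Finset.Iio (⟨W.card, hWcard_lt⟩ : Fin m) := by
          ext v
          simp [Fin.lt_def]
        rw [this, Fin.card_Iio]
      have heq : Finset.univ.filter (fun v : Fin m => (v : ℕ) < W.card) = W :=
        Finset.eq_of_subset_of_card_le hsub (by rw [hfc])
      intro v
      constructor
      · intro hv
        rw [← heq] at hv
        simpa using hv
      · exact hnormal.1 v
    have hWk : W.card ≤ (k : ℕ) := by
      by_contra h
      push_neg at h
      exact hkW ((hWiff k).2 h)
    have hkjval : (k : ℕ) < (j : ℕ) := hkj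
    have hjW : j ∉ W := by
      rw [hWiff]
      omega
    have hmono_chain : ∀ n : ℕ, ∀ a b : Fin m, W.card ≤ (a : ℕ) → (a : ℕ) + n = (b : ℕ) →
        d a + inDeg GW a ≤ d b + inDeg GW b := by
      intro n
      induction n with
      | zero =>
        intro a b _ hab
        have : a = b := Fin.ext (by omega)
        rw [this]
      | succ n ih =>
        intro a b ha hab
        have hcm : (a : ℕ) + n < m := by have := b.isLt; omega
        have h1 := ih a ⟨(a : ℕ) + n, hcm⟩ ha rfl
        have h2 := hnormal.2 ⟨(a : ℕ) + n, hcm⟩ b (by show W.card ≤ (a : ℕ) + n; omega)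
          (by show (a : ℕ) + n + 1 = (b : ℕ); omega)
        rcases h2 with h | h
        · omega
        · omega
    have hchainkj : d k + inDeg GW k ≤ d j + inDeg GW j :=
      hmono_chain ((j : ℕ) - (k : ℕ)) k j hWk (by omega)
    have hGWin : ∀ v, inDeg GW v = (W.filter fun w => G w v = true).card := by
      intro v
      unfold inDeg
      congr 1
      ext w
      simp only [Finset.mem_filter, Finset.mem_univ, true_and]
      constructor
      · intro h
        have hwW : w ∈ W := by
          by_contra hw
          rw [hGW0 w hw v] at h
          exact Bool.false_ne_true h
        exact ⟨hwW, by rw [hagreeB w hwW v]; exact h⟩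
      · rintro ⟨hwW, h⟩
        rw [← hagreeB w hwW v]
        exact h
    by_cases h2a : ∃ x : Fin m, x ≠ i ∧ x ≠ k ∧ G k x = false ∧ G x k = false
    · -- simple flip of k → i plus a fresh out-neighbour x for k
      obtain ⟨x, hxi, hxk, hkx, hxk'⟩ := h2a
      obtain ⟨G', hor, hdeg, hmem, hnot⟩ :=
        OVSAux.exchange_upd hGor {i, k} (fun v => if v = i then j else i)
          (fun v => if v = i then k else x)
          (by intro v hv; simp only [Finset.mem_insert, Finset.mem_singleton] at hv; rcases hv with rfl|rfl <;> simp [n_ki, hij, hki])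
          (by intro v hv; simp only [Finset.mem_insert, Finset.mem_singleton] at hv; rcases hv with rfl|rfl <;> simp [n_ki, hik, hkx])
          (by intro v hv; simp only [Finset.mem_insert, Finset.mem_singleton] at hv; rcases hv with rfl|rfl <;> simp [n_ki, hxi, hxk, hxk'])
          (by intro v hv b hb; simp only [Finset.mem_insert, Finset.mem_singleton] at hv hb; (rcases hv with rfl|rfl <;> rcases hb with rfl|rfl) <;>
            simp [n_ki, n_ik, hxi, hxk, hxi.symm, hxk.symm])
          (by intro v hv; simp only [Finset.mem_insert, Finset.mem_singleton] at hv; rcases hv with rfl|rfl <;>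
            simp [n_ki, n_ik, hxi, hxk, Ne.symm hxi, Ne.symm hxk])
      refine ⟨G', ⟨hor, fun v => by rw [hdeg v, hGdeg v]⟩, ?_, ?_⟩
      · intro v hv
        rw [hnot v ?_, hagree v hv]
        simp only [Finset.mem_insert, Finset.mem_singleton]
        rintro (rfl | rfl)
        · exact hi hv
        · exact hkW hv
      · have h := hmem i (by simp)
        simpa using h
    · -- k is "full": adjacent to everything
      have hfull : ∀ x : Fin m, x ≠ k → G k x = true ∨ G x k = true := by
        intro x hxk
        by_cases hxi : x = i
        · rw [hxi]; left; exact hki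
        · by_cases hkx : G k x = true
          · left; exact hkx
          · by_cases hxk' : G x k = true
            · right; exact hxk'
            · exact absurd ⟨x, hxi, hxk, by simpa using hkx, by simpa using hxk'⟩ h2a
      by_cases hjk : G j k = true
      · -- triangle reversal i → j → k → i
        have hkjE : G k j = false := hGor j k hjk
        obtain ⟨G', hor, hdeg, hmem, hnot⟩ :=
          OVSAux.exchange_upd hGor {i, j, k}
            (fun v => if v = i then j else if v = j then k else i)
            (fun v => if v = i then k else if v = j then i else j)
            (by intro v hv; simp only [Finset.mem_insert, Finset.mem_singleton] at hv; rcases hv with rfl|rfl|rfl <;> simp [n_ji, n_ki, n_kj, hij, hjk, hki])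
            (by intro v hv; simp only [Finset.mem_insert, Finset.mem_singleton] at hv; rcases hv with rfl|rfl|rfl <;> simp [n_ji, n_ki, n_kj, hik, hji, hkjE])
            (by intro v hv; simp only [Finset.mem_insert, Finset.mem_singleton] at hv; rcases hv with rfl|rfl|rfl <;> simp [n_ji, n_ki, n_kj, n_ij, n_ik, n_jk])
            (by intro v hv b hb; simp only [Finset.mem_insert, Finset.mem_singleton] at hv hb; (rcases hv with rfl|rfl|rfl <;> rcases hb with rfl|rfl|rfl) <;>
              simp [n_ji, n_ki, n_kj, n_ij, n_ik, n_jk])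
            (by intro v hv; simp only [Finset.mem_insert, Finset.mem_singleton] at hv; rcases hv with rfl|rfl|rfl <;>
              simp [n_ji, n_ki, n_kj, n_ij, n_ik, n_jk])
        refine ⟨G', ⟨hor, fun v => by rw [hdeg v, hGdeg v]⟩, ?_, ?_⟩
        · intro v hv
          rw [hnot v ?_, hagree v hv]
          simp only [Finset.mem_insert, Finset.mem_singleton]
          rintro (rfl | rfl | rfl)
          · exact hi hv
          · exact hjW hv
          · exact hkW hv
        · have h := hmem i (by simp)
          simpa [n_ij] using h
      · -- no edge j → k; find a suitable vertex y
        have hjkE : G j k = false := by simpa using hjk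
        have hyex : ∃ y, G y k = true ∧ y ∉ W ∧ G y j = false := by
          by_contra hno
          push_neg at hno
          simp only [Bool.not_eq_false] at hno
          set Bk : Finset (Fin m) := Finset.univ.filter (fun x => G x k = true) with hBk
          set Bj : Finset (Fin m) := Finset.univ.filter (fun x => G x j = true) with hBj
          set Aj : Finset (Fin m) := Finset.univ.filter (fun x => G j x = true) with hAj
          set Ak : Finset (Fin m) := Finset.univ.filter (fun x => G k x = true) with hAk
          have hAkcard : Ak.card = d k := hGdeg k
          have hAjcard : Aj.card = d j := hGdeg j
          have hsubf : (Finset.univ : Finset (Fin m)) ⊆ Ak ∪ Bk ∪ {k} := by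
            intro x _
            by_cases hxk : x = k
            · simp [hxk]
            · rcases hfull x hxk with h | h <;> simp [hAk, hBk, h]
          have hm1 : m ≤ Ak.card + Bk.card + 1 := by
            have h1 : (Finset.univ : Finset (Fin m)).card = m := by simp
            have h2 := Finset.card_le_card hsubf
            have h3 := Finset.card_union_le (Ak ∪ Bk) ({k} : Finset (Fin m))
            have h4 := Finset.card_union_le Ak Bk
            simp only [Finset.card_singleton] at h3
            omega
          have hdisj : Disjoint Aj Bj := by
            rw [Finset.disjoint_left]
            intro x hx hx'
            simp only [hAj, Finset.mem_filter, Finset.mem_univ, true_and] at hx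
            simp only [hBj, Finset.mem_filter, Finset.mem_univ, true_and] at hx'
            rw [hGor j x hx] at hx'
            exact Bool.false_ne_true hx'
          have hdisj2 : Disjoint (Aj ∪ Bj) ({j} : Finset (Fin m)) := by
            rw [Finset.disjoint_singleton_right]
            simp [hAj, hBj, OVSAux.no_loop hGor j]
          have hm2 : Aj.card + Bj.card + 1 ≤ m := by
            have h1 : (Aj ∪ Bj ∪ {j}).card = Aj.card + Bj.card + 1 := by
              rw [Finset.card_union_of_disjoint hdisj2, Finset.card_union_of_disjoint hdisj]
              simp
            have h2 := Finset.card_le_univ (Aj ∪ Bj ∪ {j})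
            simp only [Finset.card_univ, Fintype.card_fin] at h2
            omega
          have hsplitk : (Bk ∩ W).card + (Bk \ W).card = Bk.card :=
            Finset.card_inter_add_card_sdiff _ _
          have hsplitj : (Bj ∩ W).card + (Bj \ W).card = Bj.card :=
            Finset.card_inter_add_card_sdiff _ _
          have hBkW : Bk ∩ W = W.filter (fun w => G w k = true) := by
            ext x
            simp only [hBk, Finset.mem_inter, Finset.mem_filter, Finset.mem_univ, true_and]
            tauto
          have hBjW : Bj ∩ W = W.filter (fun w => G w j = true) := by
            ext x
            simp only [hBj, Finset.mem_inter, Finset.mem_filter, Finset.mem_univ, true_and]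
            tauto
          have e1 : inDeg GW k = (Bk ∩ W).card := by rw [hGWin k, hBkW]
          have e2 : inDeg GW j = (Bj ∩ W).card := by rw [hGWin j, hBjW]
          have hss : insert i (Bk \ W) ⊆ Bj \ W := by
            intro x hx
            rcases Finset.mem_insert.1 hx with rfl | hx
            · simp [hBj, hij, hi]
            · obtain ⟨hxB, hxW⟩ := Finset.mem_sdiff.1 hx
              simp only [hBk, Finset.mem_filter, Finset.mem_univ, true_and] at hxB
              simp only [Finset.mem_sdiff, hBj, Finset.mem_filter, Finset.mem_univ, true_and]
              exact ⟨hno x hxB hxW, hxW⟩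
          have hiBk : i ∉ Bk \ W := by simp [hBk, hik]
          have hm3 : (Bk \ W).card + 1 ≤ (Bj \ W).card := by
            have h := Finset.card_le_card hss
            rwa [Finset.card_insert_of_notMem hiBk] at h
          rw [e1, e2] at hchainkj
          rw [← hAkcard, ← hAjcard] at hchainkj
          omega
        obtain ⟨y, hyk, hyW, hyj⟩ := hyex
        have hky : G k y = false := hGor y k hyk
        have n_yi : y ≠ i := by
          intro h
          rw [h, hik] at hyk
          exact Bool.false_ne_true hyk
        have n_iy : i ≠ y := n_yi.symm
        have n_yk : y ≠ k := by
          intro h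
          rw [h, OVSAux.no_loop hGor k] at hyk
          exact Bool.false_ne_true hyk
        have n_ky : k ≠ y := n_yk.symm
        have n_yj : y ≠ j := by
          intro h
          rw [h, hjkE] at hyk
          exact Bool.false_ne_true hyk
        have n_jy : j ≠ y := n_yj.symm
        by_cases hjy : G j y = true
        · -- 4-cycle reversal i → j → y → k → i
          obtain ⟨G', hor, hdeg, hmem, hnot⟩ :=
            OVSAux.exchange_upd hGor {i, j, y, k}
              (fun v => if v = i then j else if v = j then y else if v = y then k else i)
              (fun v => if v = i then k else if v = j then i else if v = y then j else y)
              (by intro v hv; simp only [Finset.mem_insert, Finset.mem_singleton] at hv; rcases hv with rfl|rfl|rfl|rfl <;>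
                simp [n_ji, n_ki, n_kj, n_ij, n_ik, n_jk, n_yi, n_yk, n_yj, n_iy, n_ky, n_jy, hij, hjy, hyk, hki])
              (by intro v hv; simp only [Finset.mem_insert, Finset.mem_singleton] at hv; rcases hv with rfl|rfl|rfl|rfl <;>
                simp [n_ji, n_ki, n_kj, n_ij, n_ik, n_jk, n_yi, n_yk, n_yj, n_iy, n_ky, n_jy, hik, hji, hyj, hky])
              (by intro v hv; simp only [Finset.mem_insert, Finset.mem_singleton] at hv; rcases hv with rfl|rfl|rfl|rfl <;>
                simp [n_ji, n_ki, n_kj, n_ij, n_ik, n_jk, n_yi, n_yk, n_yj, n_iy, n_ky, n_jy])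
              (by intro v hv b hb; simp only [Finset.mem_insert, Finset.mem_singleton] at hv hb; (rcases hv with rfl|rfl|rfl|rfl <;> rcases hb with rfl|rfl|rfl|rfl) <;>
                simp [n_ji, n_ki, n_kj, n_ij, n_ik, n_jk, n_yi, n_yk, n_yj, n_iy, n_ky, n_jy])
              (by intro v hv; simp only [Finset.mem_insert, Finset.mem_singleton] at hv; rcases hv with rfl|rfl|rfl|rfl <;>
                simp [n_ji, n_ki, n_kj, n_ij, n_ik, n_jk, n_yi, n_yk, n_yj, n_iy, n_ky, n_jy])
          refine ⟨G', ⟨hor, fun v => by rw [hdeg v, hGdeg v]⟩, ?_, ?_⟩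
          · intro v hv
            rw [hnot v ?_, hagree v hv]
            simp only [Finset.mem_insert, Finset.mem_singleton]
            rintro (rfl | rfl | rfl | rfl)
            · exact hi hv
            · exact hjW hv
            · exact hyW hv
            · exact hkW hv
          · have h := hmem i (by simp)
            simpa [n_ij] using h
        · -- path-free case: flip y → k and send y to j
          have hjyE : G j y = false := by simpa using hjy
          obtain ⟨G', hor, hdeg, hmem, hnot⟩ :=
            OVSAux.exchange_upd hGor {i, k, y}
              (fun v => if v = i then j else if v = k then i else k)
              (fun v => if v = i then k else if v = k then y else j)
              (by intro v hv; simp only [Finset.mem_insert, Finset.mem_singleton] at hv; rcases hv with rfl|rfl|rfl <;>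
                simp [n_ji, n_ki, n_kj, n_ij, n_ik, n_jk, n_yi, n_yk, n_yj, n_iy, n_ky, n_jy, hij, hki, hyk])
              (by intro v hv; simp only [Finset.mem_insert, Finset.mem_singleton] at hv; rcases hv with rfl|rfl|rfl <;>
                simp [n_ji, n_ki, n_kj, n_ij, n_ik, n_jk, n_yi, n_yk, n_yj, n_iy, n_ky, n_jy, hik, hky, hyj])
              (by intro v hv; simp only [Finset.mem_insert, Finset.mem_singleton] at hv; rcases hv with rfl|rfl|rfl <;>
                simp [n_ki, n_ik, n_yi, n_yk, n_iy, n_ky, n_yj, n_jy, n_ji, n_jk, n_kj, hjyE])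
              (by intro v hv b hb; simp only [Finset.mem_insert, Finset.mem_singleton] at hv hb; (rcases hv with rfl|rfl|rfl <;> rcases hb with rfl|rfl|rfl) <;>
                simp [n_ki, n_ik, n_yi, n_yk, n_iy, n_ky, n_yj, n_jy, n_ji, n_jk, n_kj])
              (by intro v hv; simp only [Finset.mem_insert, Finset.mem_singleton] at hv; rcases hv with rfl|rfl|rfl <;>
                simp [n_ki, n_ik, n_yi, n_yk, n_iy, n_ky, n_yj, n_jy, n_ji, n_jk, n_kj])
          refine ⟨G', ⟨hor, fun v => by rw [hdeg v, hGdeg v]⟩, ?_, ?_⟩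
          · intro v hv
            rw [hnot v ?_, hagree v hv]
            simp only [Finset.mem_insert, Finset.mem_singleton]
            rintro (rfl | rfl | rfl)
            · exact hi hv
            · exact hkW hv
            · exact hyW hv
          · have h := hmem i (by simp)
            simpa using h
  · -- easy case: no edge k → i, just swap within i's out-neighbourhood
    have hkiE : G k i = false := by simpa using hki
    obtain ⟨G', hor, hdeg, hmem, hnot⟩ :=
      OVSAux.exchange_upd hGor {i} (fun _ => j) (fun _ => k)
        (by intro v hv; simp only [Finset.mem_insert, Finset.mem_singleton] at hv; rcases hv with rfl <;> simp [hij])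
        (by intro v hv; simp only [Finset.mem_insert, Finset.mem_singleton] at hv; rcases hv with rfl <;> simp [hik])
        (by intro v hv; simp only [Finset.mem_insert, Finset.mem_singleton] at hv; rcases hv with rfl <;> simp [n_ki, hkiE])
        (by intro v hv b hb; simp only [Finset.mem_insert, Finset.mem_singleton] at hv hb; (rcases hv with rfl <;> rcases hb with rfl) <;> simp [n_ki])
        (by intro v hv; simp only [Finset.mem_insert, Finset.mem_singleton] at hv; rcases hv with rfl <;> simp [n_ki])
    refine ⟨G', ⟨hor, fun v => by rw [hdeg v, hGdeg v]⟩, ?_, ?_⟩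
    · intro v hv
      rw [hnot v ?_, hagree v hv]
      simp only [Finset.mem_singleton]
      rintro rfl
      exact hi hv
    · exact hmem i (by simp)
end

section
/- Let T_{n₁,…,n_t} be a 2H-tree and let k be a nonnegative integer. Then T_{n₁,…,n_t} admits a star edge coloring with t + k colors if and only if there exists an oriented graph on t + k vertices v₁,…,v_{t+k} in which the outdegree of vᵢ equals nᵢ for every 1 ≤ i ≤ t and the outdegree of vᵢ equals 0 for every t < i ≤ t + k. -/
/-- A star edge coloring of `G` with `k` colors: a proper edge coloring such that
no path or cycle of length four (four edges) is bi-colored. The walk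
`a-b-x-y-z` ranges over all paths of length four (`a,b,x,y,z` distinct) and all
cycles of length four (`z = a` and `a,b,x,y` distinct). -/
def IsStarEdgeColoring {V : Type*} (G : SimpleGraph V) {k : ℕ} (c : Sym2 V → Fin k) : Prop :=
  (∀ ⦃u v w : V⦄, G.Adj u v → G.Adj u w → v ≠ w → c s(u, v) ≠ c s(u, w)) ∧
  (∀ a b x y z : V, G.Adj a b → G.Adj b x → G.Adj x y → G.Adj y z →
    a ≠ x → a ≠ y → b ≠ y → b ≠ z → x ≠ z →
    ¬(c s(a, b) = c s(x, y) ∧ c s(b, x) = c s(y, z)))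

/-- The star chromatic index of `G`: the least `k` admitting a star edge coloring. -/
noncomputable def starChromaticIndex {V : Type*} (G : SimpleGraph V) : ℕ :=
  sInf {k : ℕ | ∃ c : Sym2 V → Fin k, IsStarEdgeColoring G c}
/-- The 2H-tree `T_{n₁,…,n_t}`: a root (`none`), its `t` neighbours `uᵢ = some ⟨i, none⟩`,
and for each `i`, `n i` further leaves `some ⟨i, some j⟩` adjacent to `uᵢ`. -/
def twoHTree (t : ℕ) (n : Fin t → ℕ) :
    SimpleGraph (Option (Σ i : Fin t, Option (Fin (n i)))) :=
  SimpleGraph.fromRel (fun x y =>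
    (x = none ∧ ∃ i : Fin t, y = some ⟨i, none⟩) ∨
    (∃ (i : Fin t) (j : Fin (n i)), x = some ⟨i, none⟩ ∧ y = some ⟨i, some j⟩))
namespace TwoHAux

abbrev V (t : ℕ) (n : Fin t → ℕ) := Option (Σ i : Fin t, Option (Fin (n i)))

variable {t k : ℕ} {n : Fin t → ℕ}

lemma mid_inj {i i' : Fin t} (h : (some ⟨i, none⟩ : V t n) = some ⟨i', none⟩) : i = i' := by
  injection h with h; exact congrArg Sigma.fst h

lemma leaf_fst {i i' : Fin t} {j : Fin (n i)} {j' : Fin (n i')}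
    (h : (some ⟨i, some j⟩ : V t n) = some ⟨i', some j'⟩) : i = i' := by
  injection h with h; exact congrArg Sigma.fst h

lemma leaf_snd {i : Fin t} {j j' : Fin (n i)}
    (h : (some ⟨i, some j⟩ : V t n) = some ⟨i, some j'⟩) : j = j' := by
  injection h with h
  obtain ⟨-, h2⟩ := Sigma.mk.inj_iff.mp h
  exact Option.some.inj (eq_of_heq h2)

lemma mid_ne_leaf {i i' : Fin t} {j : Fin (n i')} :
    (some ⟨i, none⟩ : V t n) ≠ some ⟨i', some j⟩ := by
  intro h; injection h with h
  obtain ⟨rfl, h2⟩ := Sigma.mk.inj_iff.mp h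
  exact Option.some_ne_none j (eq_of_heq h2).symm

lemma adj_root_mid (i : Fin t) : (twoHTree t n).Adj none (some ⟨i, none⟩) := by
  rw [twoHTree, SimpleGraph.fromRel_adj]
  exact ⟨by simp, Or.inl (Or.inl ⟨rfl, i, rfl⟩)⟩

lemma adj_mid_leaf (i : Fin t) (j : Fin (n i)) :
    (twoHTree t n).Adj (some ⟨i, none⟩) (some ⟨i, some j⟩) := by
  rw [twoHTree, SimpleGraph.fromRel_adj]
  exact ⟨mid_ne_leaf, Or.inl (Or.inr ⟨i, j, rfl, rfl⟩)⟩

lemma adj_classify {x y : V t n} (h : (twoHTree t n).Adj x y) :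
    (x = none ∧ ∃ i, y = some ⟨i, none⟩) ∨
    (y = none ∧ ∃ i, x = some ⟨i, none⟩) ∨
    (∃ i j, x = some ⟨i, none⟩ ∧ y = some ⟨i, some j⟩) ∨
    (∃ i j, y = some ⟨i, none⟩ ∧ x = some ⟨i, some j⟩) := by
  rw [twoHTree, SimpleGraph.fromRel_adj] at h
  rcases h with ⟨-, (h | h) | (h | h)⟩
  · exact Or.inl h
  · exact Or.inr (Or.inr (Or.inl h))
  · exact Or.inr (Or.inl h)
  · exact Or.inr (Or.inr (Or.inr h))

lemma adj_none {w : V t n} (h : (twoHTree t n).Adj none w) : ∃ i, w = some ⟨i, none⟩ := by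
  rcases adj_classify h with ⟨-, hw⟩ | ⟨-, i, hw⟩ | ⟨i, j, hw, -⟩ | ⟨i, j, -, hw⟩
  · exact hw
  · exact absurd hw.symm (by simp)
  · exact absurd hw.symm (by simp)
  · exact absurd hw.symm (by simp)

lemma adj_mid {i : Fin t} {w : V t n} (h : (twoHTree t n).Adj (some ⟨i, none⟩) w) :
    w = none ∨ ∃ j, w = some ⟨i, some j⟩ := by
  rcases adj_classify h with ⟨hx, -⟩ | ⟨hw, -⟩ | ⟨i', j, hx, hw⟩ | ⟨i', j, hw, hx⟩
  · exact absurd hx (by simp)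
  · exact Or.inl hw
  · obtain rfl := mid_inj hx
    exact Or.inr ⟨j, hw⟩
  · exact absurd hx mid_ne_leaf

lemma adj_leaf {i : Fin t} {j : Fin (n i)} {w : V t n}
    (h : (twoHTree t n).Adj (some ⟨i, some j⟩) w) : w = some ⟨i, none⟩ := by
  rcases adj_classify h with ⟨hx, -⟩ | ⟨-, i', hx⟩ | ⟨i', j', hx, -⟩ | ⟨i', j', hw, hx⟩
  · exact absurd hx (by simp)
  · exact absurd hx mid_ne_leaf.symm
  · exact absurd hx mid_ne_leaf.symm
  · obtain rfl := leaf_fst hx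
    exact hw

lemma walk_struct {a b x y z : V t n} (hab : (twoHTree t n).Adj a b)
    (hbx : (twoHTree t n).Adj b x) (hxy : (twoHTree t n).Adj x y)
    (hyz : (twoHTree t n).Adj y z) (hax : a ≠ x) (hby : b ≠ y) (hxz : x ≠ z) :
    ∃ (i i' : Fin t) (j : Fin (n i)) (j' : Fin (n i')),
      a = some ⟨i, some j⟩ ∧ b = some ⟨i, none⟩ ∧ x = none ∧
      y = some ⟨i', none⟩ ∧ z = some ⟨i', some j'⟩ ∧ i ≠ i' := by
  rcases b with _ | ⟨ib, _ | jb⟩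
  · -- b = none
    obtain ⟨ix, rfl⟩ := adj_none hbx
    rcases adj_mid hxy with rfl | ⟨jy, rfl⟩
    · exact absurd rfl hby
    · exact absurd (adj_leaf hyz).symm hxz
  · -- b = mid ib
    rcases adj_mid hab.symm with rfl | ⟨ja, rfl⟩
    · -- a = none
      rcases adj_mid hbx with rfl | ⟨jx, rfl⟩
      · exact absurd rfl hax
      · exact absurd (adj_leaf hxy).symm hby
    · -- a = leaf ib ja
      rcases adj_mid hbx with rfl | ⟨jx, rfl⟩
      · -- x = none
        obtain ⟨iy, rfl⟩ := adj_none hxy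
        have hii : ib ≠ iy := fun h => hby (by rw [h])
        rcases adj_mid hyz with rfl | ⟨jz, rfl⟩
        · exact absurd rfl hxz
        · exact ⟨ib, iy, ja, jz, rfl, rfl, rfl, rfl, rfl, hii⟩
      · exact absurd (adj_leaf hxy).symm hby
  · -- b = leaf ib jb
    have h1 := adj_leaf hab.symm
    have h2 := adj_leaf hbx
    exact absurd (h1.trans h2.symm) hax

end TwoHAux

namespace TwoHAux

def gfun (t k : ℕ) (ht : 0 < t + k) (n : Fin t → ℕ)
    (e : ∀ i : Fin t, Fin (n i) → Fin (t + k)) : V t n → V t n → Fin (t + k)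
  | none, some ⟨i, none⟩ => Fin.castAdd k i
  | some ⟨i, none⟩, none => Fin.castAdd k i
  | some ⟨_, none⟩, some ⟨i, some j⟩ => e i j
  | some ⟨i, some j⟩, some ⟨_, none⟩ => e i j
  | _, _ => ⟨0, ht⟩

lemma gfun_symm (t k : ℕ) (ht : 0 < t + k) (n : Fin t → ℕ)
    (e : ∀ i : Fin t, Fin (n i) → Fin (t + k)) (x y : V t n) :
    gfun t k ht n e x y = gfun t k ht n e y x := by
  rcases x with _ | ⟨i, _ | j⟩ <;> rcases y with _ | ⟨i', _ | j'⟩ <;> rfl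

variable {t k : ℕ} {n : Fin t → ℕ}

lemma backward (ht : 1 ≤ t)
    (hR : ∃ R : Fin (t + k) → Fin (t + k) → Bool, IsOriented R ∧
        ∀ i : Fin (t + k), outDeg R i = if h : (i : ℕ) < t then n ⟨i, h⟩ else 0) :
    ∃ c : Sym2 (V t n) → Fin (t + k), IsStarEdgeColoring (twoHTree t n) c := by
  obtain ⟨R, hor, hdeg⟩ := hR
  have hpos : 0 < t + k := by omega
  have hRself : ∀ v, R v v = false := by
    intro v
    cases hv : R v v
    · rfl
    · have := hor v v hv
      rw [hv] at this
      exact this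
  have hcard : ∀ i : Fin t, (outNbrs R (Fin.castAdd k i)).card = n i := by
    intro i
    have h1 := hdeg (Fin.castAdd k i)
    have h2 : ((Fin.castAdd k i : Fin (t + k)) : ℕ) < t := by simpa using i.isLt
    rw [dif_pos h2] at h1
    have h3 : (⟨((Fin.castAdd k i : Fin (t + k)) : ℕ), h2⟩ : Fin t) = i := by
      ext; simp
    rw [h3] at h1
    exact h1
  let e : ∀ i : Fin t, Fin (n i) → Fin (t + k) :=
    fun i j => ((outNbrs R (Fin.castAdd k i)).orderIsoOfFin (hcard i) j : Fin (t + k))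
  have he_mem : ∀ (i : Fin t) (j : Fin (n i)), R (Fin.castAdd k i) (e i j) = true := by
    intro i j
    have h := ((outNbrs R (Fin.castAdd k i)).orderIsoOfFin (hcard i) j).2
    simp only [outNbrs, Finset.mem_filter] at h
    exact h.2
  have he_inj : ∀ i : Fin t, Function.Injective (e i) := by
    intro i j j' h
    exact ((outNbrs R (Fin.castAdd k i)).orderIsoOfFin (hcard i)).injective
      (Subtype.coe_injective h)
  refine ⟨Sym2.lift ⟨gfun t k hpos n e, gfun_symm t k hpos n e⟩, ?_, ?_⟩
  · -- properness
    intro u v w huv huw hvw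
    rcases adj_classify huv with ⟨rfl, i, rfl⟩ | ⟨rfl, i, rfl⟩ | ⟨i, j, rfl, rfl⟩ | ⟨i, j, rfl, rfl⟩
    · -- u = none, v = mid i
      obtain ⟨i', rfl⟩ := adj_none huw
      have hne : i ≠ i' := fun h => hvw (by rw [h])
      intro h
      have h' : Fin.castAdd k i = Fin.castAdd k i' := h
      exact hne (by ext; simpa using congrArg Fin.val h')
    · -- u = mid i, v = none
      rcases adj_mid huw with rfl | ⟨j, rfl⟩
      · exact absurd rfl hvw
      · intro h
        have h' : Fin.castAdd k i = e i j := h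
        have := he_mem i j
        rw [← h', hRself] at this
        exact Bool.noConfusion this
    · -- u = mid i, v = leaf i j
      rcases adj_mid huw with rfl | ⟨j', rfl⟩
      · intro h
        have h' : e i j = Fin.castAdd k i := h
        have := he_mem i j
        rw [h', hRself] at this
        exact Bool.noConfusion this
      · have hne : j ≠ j' := fun h => hvw (by rw [h])
        intro h
        have h' : e i j = e i j' := h
        exact hne (he_inj i h')
    · -- u = leaf i j, v = mid i
      have hw := adj_leaf huw
      exact absurd hw.symm hvw
  · -- star property
    intro a b x y z hab hbx hxy hyz hax hay hby hbz hxz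
    rintro ⟨h1, h2⟩
    obtain ⟨i, i', j, j', rfl, rfl, rfl, rfl, rfl, -⟩ :=
      walk_struct hab hbx hxy hyz hax hby hxz
    have h1' : e i j = Fin.castAdd k i' := h1
    have h2' : Fin.castAdd k i = e i' j' := h2
    have H1 : R (Fin.castAdd k i) (Fin.castAdd k i') = true := by
      have := he_mem i j; rwa [h1'] at this
    have H2 : R (Fin.castAdd k i') (Fin.castAdd k i) = true := by
      have := he_mem i' j'; rwa [← h2'] at this
    have := hor _ _ H1
    rw [H2] at this
    exact Bool.noConfusion this

end TwoHAux

namespace TwoHAux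

lemma extend_perm {t k : ℕ} (a : Fin t → Fin (t + k)) (ha : Function.Injective a) :
    ∃ σ : Equiv.Perm (Fin (t + k)), ∀ i, σ (Fin.castAdd k i) = a i := by
  classical
  set S : Finset (Fin (t + k)) := Finset.image a Finset.univ with hS
  have hScard : S.card = t := by
    rw [hS, Finset.card_image_of_injective _ ha]; simp
  let f : Fin t → {x : Fin (t + k) // x ∈ S} :=
    fun i => ⟨a i, Finset.mem_image_of_mem a (Finset.mem_univ i)⟩
  have hf : Function.Bijective f := by
    constructor
    · intro i i' h
      exact ha (congrArg Subtype.val h)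
    · rintro ⟨x, hx⟩
      obtain ⟨i, -, rfl⟩ := Finset.mem_image.mp hx
      exact ⟨i, rfl⟩
  let e₁ : Fin t ≃ {x : Fin (t + k) // x ∈ S} := Equiv.ofBijective f hf
  have hcompl : Fintype.card {x : Fin (t + k) // x ∉ S} = k := by
    have h1 : Fintype.card {x : Fin (t + k) // x ∉ S} = (Sᶜ).card := by
      rw [← Fintype.card_coe (Sᶜ)]
      exact Fintype.card_congr (Equiv.subtypeEquivRight (fun x => by simp))
    rw [h1, Finset.card_compl, hScard, Fintype.card_fin]
    omega
  let e₂ : Fin k ≃ {x : Fin (t + k) // x ∉ S} :=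
    Fintype.equivOfCardEq (by simp [hcompl])
  refine ⟨finSumFinEquiv.symm.trans ((e₁.sumCongr e₂).trans
    (Equiv.sumCompl (fun x => x ∈ S))), ?_⟩
  intro i
  simp only [Equiv.trans_apply, finSumFinEquiv_symm_apply_castAdd, Equiv.sumCongr_apply,
    Sum.map_inl, Equiv.sumCompl_apply_inl]
  rfl

variable {t k : ℕ} {n : Fin t → ℕ}

lemma forward (ht : 1 ≤ t)
    (hc : ∃ c : Sym2 (V t n) → Fin (t + k), IsStarEdgeColoring (twoHTree t n) c) :
    ∃ R : Fin (t + k) → Fin (t + k) → Bool, IsOriented R ∧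
        ∀ i : Fin (t + k), outDeg R i = if h : (i : ℕ) < t then n ⟨i, h⟩ else 0 := by
  classical
  obtain ⟨c, hprop, hstar⟩ := hc
  set a : Fin t → Fin (t + k) := fun i => c s((none : V t n), some ⟨i, none⟩) with ha_def
  have ha_inj : Function.Injective a := by
    intro i i' h
    by_contra hne
    exact hprop (adj_root_mid i) (adj_root_mid i') (fun he => hne (mid_inj he)) h
  obtain ⟨σ, hσ⟩ := extend_perm a ha_inj
  have hσ' : ∀ (v : Fin (t + k)) (hv : (v : ℕ) < t), σ v = a ⟨v, hv⟩ := by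
    intro v hv
    have h1 : Fin.castAdd k (⟨(v : ℕ), hv⟩ : Fin t) = v := by ext; simp
    have h2 := hσ ⟨(v : ℕ), hv⟩
    rwa [h1] at h2
  set P : Fin t → Finset (Fin (t + k)) :=
    fun i => Finset.image (fun j : Fin (n i) => c s(some ⟨i, none⟩, some ⟨i, some j⟩))
      Finset.univ with hP_def
  have hpend_inj : ∀ i : Fin t,
      Function.Injective (fun j : Fin (n i) => c s(some ⟨i, none⟩, some ⟨i, some j⟩)) := by
    intro i j j' h
    by_contra hne
    exact hprop (adj_mid_leaf i j) (adj_mid_leaf i j') (fun he => hne (leaf_snd he)) h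
  have hPcard : ∀ i, (P i).card = n i := by
    intro i
    rw [hP_def]
    rw [Finset.card_image_of_injective _ (hpend_inj i)]
    simp
  have haP : ∀ i, a i ∉ P i := by
    intro i hmem
    rw [hP_def] at hmem
    obtain ⟨j, -, hj⟩ := Finset.mem_image.mp hmem
    refine hprop ((adj_root_mid i).symm) (adj_mid_leaf i j) (by simp) ?_
    rw [Sym2.eq_swap]
    exact hj.symm
  refine ⟨fun i j => if h : (i : ℕ) < t then decide (σ j ∈ P ⟨i, h⟩) else false, ?_, ?_⟩
  · -- oriented
    intro i j hij
    dsimp only at hij ⊢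
    by_cases hi : (i : ℕ) < t
    · rw [dif_pos hi, decide_eq_true_iff] at hij
      by_cases hj : (j : ℕ) < t
      · rw [dif_pos hj]
        rw [decide_eq_false_iff_not]
        intro hji
        by_cases hij' : (i : ℕ) = (j : ℕ)
        · have : (⟨(i : ℕ), hi⟩ : Fin t) = ⟨(j : ℕ), hj⟩ := by ext; exact hij'
          rw [this] at hij
          rw [hσ' j hj] at hij
          exact haP _ hij
        · rw [hσ' j hj] at hij
          rw [hσ' i hi] at hji
          rw [hP_def] at hij hji
          obtain ⟨jj, -, hjj⟩ := Finset.mem_image.mp hij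
          obtain ⟨jj', -, hjj'⟩ := Finset.mem_image.mp hji
          simp only [ha_def] at hjj hjj'
          have hmm' : (⟨(i : ℕ), hi⟩ : Fin t) ≠ ⟨(j : ℕ), hj⟩ :=
            fun h => hij' (by simpa using h)
          refine hstar (some ⟨⟨(i : ℕ), hi⟩, some jj⟩) (some ⟨⟨(i : ℕ), hi⟩, none⟩) none
            (some ⟨⟨(j : ℕ), hj⟩, none⟩) (some ⟨⟨(j : ℕ), hj⟩, some jj'⟩)
            (adj_mid_leaf _ jj).symm ((adj_root_mid _).symm) (adj_root_mid _)
            (adj_mid_leaf _ jj')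
            (by simp) mid_ne_leaf.symm (fun h => hmm' (mid_inj h)) mid_ne_leaf (by simp) ?_
          constructor
          · rw [Sym2.eq_swap]
            exact hjj
          · rw [Sym2.eq_swap]
            exact hjj'.symm
      · rw [dif_neg hj]
    · rw [dif_neg hi] at hij
      exact Bool.noConfusion hij
  · -- outdegrees
    intro i
    by_cases hi : (i : ℕ) < t
    · rw [dif_pos hi]
      rw [outDeg]
      have hfilter : Finset.filter
          (fun j => (if h : (i : ℕ) < t then decide (σ j ∈ P ⟨i, h⟩) else false) = true)
          Finset.univ = Finset.map σ.symm.toEmbedding (P ⟨i, hi⟩) := by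
        ext j
        simp only [Finset.mem_filter, Finset.mem_univ, true_and, dif_pos hi,
          decide_eq_true_iff, Finset.mem_map, Equiv.coe_toEmbedding]
        constructor
        · intro h
          exact ⟨σ j, h, Equiv.symm_apply_apply σ j⟩
        · rintro ⟨p, hp, rfl⟩
          simpa using hp
      rw [hfilter, Finset.card_map, hPcard]
    · rw [dif_neg hi]
      rw [outDeg]
      have : Finset.filter
          (fun j => (if h : (i : ℕ) < t then decide (σ j ∈ P ⟨i, h⟩) else false) = true)
          Finset.univ = ∅ := by
        ext j
        simp [dif_neg hi]
      rw [this, Finset.card_empty]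

end TwoHAux

/-- Theorem 4.3. The 2H-tree `T_{n₁,…,n_t}` admits a star edge coloring
with `t + k` colors iff there is an oriented graph on `t + k` vertices in which vertex
`i` has outdegree `n i` for `i < t` and outdegree `0` otherwise. -/
theorem twoHTree_star_coloring_iff_orientation (t k : ℕ) (ht : 1 ≤ t)
    (n : Fin t → ℕ) (hn : Monotone n) :
    (∃ c : Sym2 (Option (Σ i : Fin t, Option (Fin (n i)))) → Fin (t + k),
        IsStarEdgeColoring (twoHTree t n) c) ↔
    (∃ R : Fin (t + k) → Fin (t + k) → Bool, IsOriented R ∧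
        ∀ i : Fin (t + k), outDeg R i = if h : (i : ℕ) < t then n ⟨i, h⟩ else 0) := by
  constructor
  · exact fun h => TwoHAux.forward ht h
  · exact fun h => TwoHAux.backward ht h
end

section
/- For every 2H-tree T_{n₁,…,n_t}, the star chromatic index satisfies χ'_s(T_{n₁,…,n_t}) = t + k*, where k* is the least nonnegative integer k for which there exists an oriented graph on t + k vertices v₁,…,v_{t+k} in which the outdegree of vᵢ equals nᵢ for every 1 ≤ i ≤ t and all the remaining k vertices have outdegree 0. -/
namespace TwoH

variable {t : ℕ} {n : Fin t → ℕ} {m : ℕ}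

abbrev V (t : ℕ) (n : Fin t → ℕ) := Option (Σ i : Fin t, Option (Fin (n i)))

def colF (g : ∀ i : Fin t, Fin (n i) → Fin m) (e : Fin t → Fin m) (d : Fin m) :
    V t n → V t n → Fin m
  | none, some ⟨i, none⟩ => e i
  | some ⟨i, none⟩, none => e i
  | some ⟨_, none⟩, some ⟨i, some j⟩ => g i j
  | some ⟨i, some j⟩, some ⟨_, none⟩ => g i j
  | _, _ => d

lemma colF_symm (g : ∀ i : Fin t, Fin (n i) → Fin m) (e : Fin t → Fin m) (d : Fin m)
    (x y : V t n) : colF g e d x y = colF g e d y x := by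
  rcases x with _ | ⟨i, _ | j⟩ <;> rcases y with _ | ⟨i', _ | j'⟩ <;> rfl


lemma uu_inj {i i' : Fin t} (h : (some ⟨i, none⟩ : V t n) = some ⟨i', none⟩) : i = i' := by
  rw [Option.some.injEq, Sigma.ext_iff] at h
  exact h.1

lemma uu_ne_lf {i i' : Fin t} {j : Fin (n i')} :
    (some ⟨i, none⟩ : V t n) ≠ some ⟨i', some j⟩ := by
  intro h
  rw [Option.some.injEq, Sigma.ext_iff] at h
  obtain ⟨h1, h2⟩ := h
  dsimp at h1
  subst h1
  exact absurd (eq_of_heq h2) (by simp)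

lemma lf_inj₂ {i : Fin t} {j j' : Fin (n i)}
    (h : (some ⟨i, some j⟩ : V t n) = some ⟨i, some j'⟩) : j = j' := by
  rw [Option.some.injEq, Sigma.ext_iff] at h
  obtain ⟨-, h2⟩ := h
  exact Option.some.inj (eq_of_heq h2)

lemma lf_eq_uu {i i' : Fin t} {j : Fin (n i)}
    (h : (some ⟨i, some j⟩ : V t n) = some ⟨i', none⟩) : False :=
  uu_ne_lf h.symm

lemma adj_rt_iff {y : V t n} :
    (twoHTree t n).Adj none y ↔ ∃ i, y = some ⟨i, none⟩ := by
  rw [twoHTree, SimpleGraph.fromRel_adj]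
  constructor
  · rintro ⟨hne, (⟨-, hi⟩ | ⟨i, j, hx, -⟩) | (⟨hy, -⟩ | ⟨i, j, -, hx⟩)⟩
    · exact hi
    · exact absurd hx (by simp)
    · exact absurd hy.symm hne
    · exact absurd hx (by simp)
  · rintro ⟨i, rfl⟩
    exact ⟨by simp, Or.inl (Or.inl ⟨rfl, i, rfl⟩)⟩

lemma adj_uu_iff {i : Fin t} {y : V t n} :
    (twoHTree t n).Adj (some ⟨i, none⟩) y ↔ y = none ∨ ∃ j, y = some ⟨i, some j⟩ := by
  rw [twoHTree, SimpleGraph.fromRel_adj]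
  constructor
  · rintro ⟨hne, (⟨hx, -⟩ | ⟨i', j, hx, hy⟩) | (⟨hy, -⟩ | ⟨i', j, hy, hx⟩)⟩
    · exact absurd hx (by simp)
    · obtain rfl := uu_inj hx
      exact Or.inr ⟨j, hy⟩
    · exact Or.inl hy
    · exact absurd hx uu_ne_lf
  · rintro (rfl | ⟨j, rfl⟩)
    · exact ⟨by simp, Or.inr (Or.inl ⟨rfl, i, rfl⟩)⟩
    · exact ⟨uu_ne_lf, Or.inl (Or.inr ⟨i, j, rfl, rfl⟩)⟩

lemma adj_lf_iff {i : Fin t} {j : Fin (n i)} {y : V t n} :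
    (twoHTree t n).Adj (some ⟨i, some j⟩) y ↔ y = some ⟨i, none⟩ := by
  rw [twoHTree, SimpleGraph.fromRel_adj]
  constructor
  · rintro ⟨hne, (⟨hx, -⟩ | ⟨i', j', hx, -⟩) | (⟨-, i', hx⟩ | ⟨i', j', hy, hx⟩)⟩
    · exact absurd hx (by simp)
    · exact absurd hx.symm uu_ne_lf
    · rw [Option.some.injEq, Sigma.ext_iff] at hx
      obtain ⟨h1, h2⟩ := hx
      dsimp at h1
      subst h1
      exact absurd (eq_of_heq h2) (by simp)
    · rw [Option.some.injEq, Sigma.ext_iff] at hx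
      obtain ⟨h1, h2⟩ := hx
      dsimp at h1
      subst h1
      obtain rfl := Option.some.inj (eq_of_heq h2)
      exact hy
  · rintro rfl
    exact ⟨fun h => uu_ne_lf h.symm, Or.inr (Or.inr ⟨i, j, rfl, rfl⟩)⟩


end TwoH

namespace TwoH

variable {t : ℕ} {n : Fin t → ℕ}

lemma R_self_false {m : ℕ} {R : Fin m → Fin m → Bool} (hor : IsOriented R) (x : Fin m) :
    R x x = false := by
  cases hxx : R x x with
  | false => rfl
  | true => have := hor x x hxx; rw [hxx] at this; exact this

lemma exists_coloring (t k : ℕ) (ht : 1 ≤ t) (n : Fin t → ℕ)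
    (R : Fin (t + k) → Fin (t + k) → Bool) (hor : IsOriented R)
    (hdeg : ∀ i : Fin (t + k), outDeg R i = if h : (i : ℕ) < t then n ⟨i, h⟩ else 0) :
    ∃ c : Sym2 (V t n) → Fin (t + k), IsStarEdgeColoring (twoHTree t n) c := by
  set e : Fin t → Fin (t + k) := Fin.castAdd k with he
  have he_inj : Function.Injective e := by
    intro a b h
    have h2 := congrArg Fin.val h
    simp only [he, Fin.coe_castAdd] at h2
    exact Fin.ext h2
  have hcard : ∀ i : Fin t, (outNbrs R (e i)).card = n i := by
    intro i
    have h1 := hdeg (e i)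
    have h2 : ((e i : ℕ)) < t := i.isLt
    rw [dif_pos h2] at h1
    have h3 : (⟨(e i : ℕ), h2⟩ : Fin t) = i := Fin.ext rfl
    rw [h3] at h1
    exact h1
  set g : ∀ i : Fin t, Fin (n i) → Fin (t + k) :=
    fun i j => ((outNbrs R (e i)).orderIsoOfFin (hcard i) j : Fin (t + k)) with hg
  have hgmem : ∀ (i : Fin t) (j : Fin (n i)), R (e i) (g i j) = true := by
    intro i j
    have h2 := ((outNbrs R (e i)).orderIsoOfFin (hcard i) j).2
    unfold outNbrs at h2
    rw [Finset.mem_filter] at h2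
    exact h2.2
  have hginj : ∀ i : Fin t, Function.Injective (g i) := by
    intro i a b h
    exact (Finset.orderIsoOfFin _ (hcard i)).injective (Subtype.ext h)
  have hge : ∀ (i i' : Fin t) (j : Fin (n i)), g i j = e i' → R (e i) (e i') = true := by
    intro i i' j h
    rw [← h]; exact hgmem i j
  refine ⟨Sym2.lift ⟨colF g e (e ⟨0, ht⟩), colF_symm g e _⟩, ?_, ?_⟩
  · intro u v w huv huw hvw
    simp only [Sym2.lift_mk]
    rcases u with _ | ⟨i, _ | j⟩
    · obtain ⟨i1, rfl⟩ := adj_rt_iff.1 huv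
      obtain ⟨i2, rfl⟩ := adj_rt_iff.1 huw
      have : i1 ≠ i2 := fun h => hvw (by rw [h])
      simpa [colF] using fun h => this (he_inj h)
    · rcases adj_uu_iff.1 huv with rfl | ⟨j1, rfl⟩ <;>
        rcases adj_uu_iff.1 huw with rfl | ⟨j2, rfl⟩
      · exact absurd rfl hvw
      · show e i ≠ g i j2
        intro h
        have := hge i i j2 h.symm
        rw [R_self_false hor] at this
        exact Bool.noConfusion this
      · show g i j1 ≠ e i
        intro h
        have := hge i i j1 h
        rw [R_self_false hor] at this
        exact Bool.noConfusion this
      · have : j1 ≠ j2 := fun h => hvw (by rw [h])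
        exact fun h => this (hginj i h)
    · obtain rfl := adj_lf_iff.1 huv
      obtain rfl := adj_lf_iff.1 huw
      exact absurd rfl hvw
  · intro a b x y z hab hbx hxy hyz hax hay hby hbz hxz
    rintro ⟨h1, h2⟩
    simp only [Sym2.lift_mk] at h1 h2
    rcases x with _ | ⟨i, _ | j⟩
    · -- x = root
      obtain ⟨i1, rfl⟩ := adj_rt_iff.1 hbx.symm
      obtain ⟨i2, rfl⟩ := adj_rt_iff.1 hxy
      rcases adj_uu_iff.1 hab.symm with rfl | ⟨j1, rfl⟩
      · exact hax rfl
      rcases adj_uu_iff.1 hyz with rfl | ⟨j2, rfl⟩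
      · exact hxz rfl
      have e1 : g i1 j1 = e i2 := h1
      have e2 : e i1 = g i2 j2 := h2
      have r1 : R (e i1) (e i2) = true := hge _ _ _ e1
      have r2 : R (e i2) (e i1) = true := hge _ _ _ e2.symm
      have := hor _ _ r1
      rw [r2] at this
      exact Bool.noConfusion this
    · -- x = u i
      rcases adj_uu_iff.1 hbx.symm with rfl | ⟨j1, rfl⟩
      · rcases adj_uu_iff.1 hxy with rfl | ⟨j2, rfl⟩
        · exact hby rfl
        · obtain rfl := adj_lf_iff.1 hyz
          exact hxz rfl
      · obtain rfl := adj_lf_iff.1 hab.symm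
        exact hax rfl
    · -- x = leaf i j
      obtain rfl := adj_lf_iff.1 hbx.symm
      obtain rfl := adj_lf_iff.1 hxy
      exact hby rfl

end TwoH

namespace TwoH

lemma lower_bound (t m : ℕ) (ht : 1 ≤ t) (n : Fin t → ℕ)
    (c : Sym2 (V t n) → Fin m) (hc : IsStarEdgeColoring (twoHTree t n) c) :
    t ≤ m ∧ ∃ R : Fin m → Fin m → Bool, IsOriented R ∧
      ∀ i : Fin m, outDeg R i = if h : (i : ℕ) < t then n ⟨i, h⟩ else 0 := by
  classical
  obtain ⟨hp, hs⟩ := hc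
  set a : Fin t → Fin m := fun i => c s((none : V t n), some ⟨i, none⟩) with ha
  have hadj1 : ∀ i : Fin t, (twoHTree t n).Adj none (some ⟨i, none⟩) :=
    fun i => adj_rt_iff.2 ⟨i, rfl⟩
  have hadj2 : ∀ (i : Fin t) (j : Fin (n i)),
      (twoHTree t n).Adj (some ⟨i, none⟩) (some ⟨i, some j⟩) :=
    fun i j => adj_uu_iff.2 (Or.inr ⟨j, rfl⟩)
  have ha_inj : Function.Injective a := by
    intro i i' h
    by_contra hne
    exact hp (hadj1 i) (hadj1 i') (fun hh => hne (uu_inj hh)) h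
  set S : Fin t → Finset (Fin m) :=
    fun i => Finset.image (fun j : Fin (n i) => c s(some ⟨i, none⟩, some ⟨i, some j⟩))
      Finset.univ with hS
  have hpend_inj : ∀ i : Fin t,
      Function.Injective (fun j : Fin (n i) => c s(some ⟨i, none⟩, some ⟨i, some j⟩)) := by
    intro i j j' h
    by_contra hne
    exact hp (hadj2 i j) (hadj2 i j') (fun hh => hne (lf_inj₂ hh)) h
  have hS_card : ∀ i, (S i).card = n i := by
    intro i
    rw [hS]
    rw [Finset.card_image_of_injective _ (hpend_inj i), Finset.card_univ, Fintype.card_fin]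
  have ha_not : ∀ i, a i ∉ S i := by
    intro i hmem
    rw [hS] at hmem
    obtain ⟨j, -, hj⟩ := Finset.mem_image.1 hmem
    have h1 : (twoHTree t n).Adj (some ⟨i, none⟩) none := (hadj1 i).symm
    have h2 := hp h1 (hadj2 i j) (by simp)
    rw [Sym2.eq_swap] at h2
    exact h2 hj.symm
  have hstar : ∀ i i' : Fin t, i ≠ i' → a i' ∈ S i → a i ∈ S i' → False := by
    intro i i' hne h1 h2
    rw [hS] at h1 h2
    obtain ⟨j, -, hj⟩ := Finset.mem_image.1 h1
    obtain ⟨j', -, hj'⟩ := Finset.mem_image.1 h2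
    refine hs (some ⟨i, some j⟩) (some ⟨i, none⟩) none (some ⟨i', none⟩) (some ⟨i', some j'⟩)
      (hadj2 i j).symm (hadj1 i).symm (hadj1 i') (hadj2 i' j')
      (by simp) (fun h => uu_ne_lf h.symm) (fun h => hne (uu_inj h)) uu_ne_lf
      (by simp) ⟨?_, ?_⟩
    · rw [Sym2.eq_swap]; exact hj
    · rw [Sym2.eq_swap]; exact hj'.symm
  have htm : t ≤ m := by simpa using Fintype.card_le_of_injective a ha_inj
  set A : Finset (Fin m) := Finset.image a Finset.univ with hA
  have hCcard : Aᶜ.card = m - t := by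
    rw [Finset.card_compl, hA, Finset.card_image_of_injective _ ha_inj]
    simp
  set E : Fin m → Fin m := fun x =>
    if h : (x : ℕ) < t then a ⟨x, h⟩
    else (Aᶜ.orderIsoOfFin hCcard ⟨(x : ℕ) - t, by have := x.isLt; omega⟩ : Fin m) with hE
  have hElt : ∀ (x : Fin m) (h : (x : ℕ) < t), E x = a ⟨x, h⟩ := fun x h => dif_pos h
  have hEmemC : ∀ (x : Fin m), ¬ (x : ℕ) < t → E x ∈ Aᶜ := by
    intro x h
    rw [hE]
    dsimp only
    rw [dif_neg h]
    exact (Aᶜ.orderIsoOfFin hCcard _).2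
  have hE_inj : Function.Injective E := by
    intro x y h
    by_cases hx : (x : ℕ) < t <;> by_cases hy : (y : ℕ) < t
    · rw [hElt x hx, hElt y hy] at h
      have h2 := congrArg Fin.val (ha_inj h)
      exact Fin.ext h2
    · exfalso
      have h1 := hEmemC y hy
      rw [← h, hElt x hx, Finset.mem_compl] at h1
      exact h1 (Finset.mem_image_of_mem a (Finset.mem_univ _))
    · exfalso
      have h1 := hEmemC x hx
      rw [h, hElt y hy, Finset.mem_compl] at h1
      exact h1 (Finset.mem_image_of_mem a (Finset.mem_univ _))
    · rw [hE] at h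
      dsimp only at h
      rw [dif_neg hx, dif_neg hy] at h
      have h2 := congrArg Fin.val
        ((Aᶜ.orderIsoOfFin hCcard).injective (Subtype.ext h))
      dsimp at h2
      have hx2 := x.isLt
      have hy2 := y.isLt
      exact Fin.ext (by omega)
  have hE_surj : Function.Surjective E := Finite.injective_iff_surjective.mp hE_inj
  refine ⟨htm, fun x y => if h : (x : ℕ) < t then decide (E y ∈ S ⟨x, h⟩) else false, ?_, ?_⟩
  · intro x y hxy
    dsimp only at hxy ⊢
    by_cases hx : (x : ℕ) < t
    · rw [dif_pos hx, decide_eq_true_iff] at hxy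
      by_cases hy : (y : ℕ) < t
      · rw [dif_pos hy, decide_eq_false_iff_not]
        intro hmem
        rw [hElt y hy] at hxy
        rw [hElt x hx] at hmem
        by_cases hxy' : (⟨x, hx⟩ : Fin t) = ⟨y, hy⟩
        · rw [hxy'] at hxy
          exact ha_not _ hxy
        · exact hstar _ _ hxy' hxy hmem
      · rw [dif_neg hy]
    · rw [dif_neg hx] at hxy
      exact Bool.noConfusion hxy
  · intro x
    by_cases hx : (x : ℕ) < t
    · rw [dif_pos hx]
      unfold outDeg
      rw [← hS_card ⟨x, hx⟩]
      apply Finset.card_bij (fun y _ => E y)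
      · intro y hy
        simp only [Finset.mem_filter, Finset.mem_univ, true_and, dif_pos hx,
          decide_eq_true_iff] at hy
        exact hy
      · intro y1 h1 y2 h2 h
        exact hE_inj h
      · intro b hb
        obtain ⟨y, rfl⟩ := hE_surj b
        exact ⟨y, by simp only [Finset.mem_filter, Finset.mem_univ, true_and, dif_pos hx,
          decide_eq_true_iff]; exact hb, rfl⟩
    · rw [dif_neg hx]
      unfold outDeg
      rw [Finset.card_eq_zero, Finset.filter_eq_empty_iff]
      intro y _
      dsimp only
      rw [dif_neg hx]
      simp

lemma K_nonempty (t : ℕ) (n : Fin t → ℕ) :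
    ∃ R : Fin (t + Finset.univ.sup n) → Fin (t + Finset.univ.sup n) → Bool, IsOriented R ∧
      ∀ i, outDeg R i = if h : (i : ℕ) < t then n ⟨i, h⟩ else 0 := by
  classical
  refine ⟨fun x y =>
    if h : (x : ℕ) < t then decide (t ≤ (y : ℕ) ∧ (y : ℕ) < t + n ⟨x, h⟩) else false, ?_, ?_⟩
  · intro x y hxy
    dsimp only at hxy ⊢
    by_cases hx : (x : ℕ) < t
    · rw [dif_pos hx, decide_eq_true_iff] at hxy
      rw [dif_neg (by omega : ¬ (y : ℕ) < t)]
    · rw [dif_neg hx] at hxy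
      exact Bool.noConfusion hxy
  · intro x
    by_cases hx : (x : ℕ) < t
    · rw [dif_pos hx]
      unfold outDeg
      have hle : n ⟨x, hx⟩ ≤ Finset.univ.sup n := Finset.le_sup (Finset.mem_univ _)
      have hcard : n ⟨x, hx⟩ = (Finset.univ : Finset (Fin (n ⟨x, hx⟩))).card := by simp
      rw [hcard]
      refine (Finset.card_bij
        (fun (j : Fin (n ⟨x, hx⟩)) _ =>
          (⟨t + (j : ℕ), by have := j.isLt; omega⟩ : Fin (t + Finset.univ.sup n)))
        ?_ ?_ ?_).symm
      · intro j _
        simp only [Finset.mem_filter, Finset.mem_univ, true_and, dif_pos hx,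
          decide_eq_true_iff]
        have := j.isLt
        omega
      · intro j1 _ j2 _ h
        have h2 := congrArg Fin.val h
        dsimp at h2
        exact Fin.ext (by omega)
      · intro b hb
        simp only [Finset.mem_filter, Finset.mem_univ, true_and, dif_pos hx,
          decide_eq_true_iff] at hb
        refine ⟨⟨(b : ℕ) - t, by omega⟩, Finset.mem_univ _, ?_⟩
        exact Fin.ext (by dsimp; omega)
    · rw [dif_neg hx]
      unfold outDeg
      rw [Finset.card_eq_zero, Finset.filter_eq_empty_iff]
      intro y _
      dsimp only
      rw [dif_neg hx]
      simp

end TwoH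


/-- The star chromatic index of the 2H-tree `T_{n₁,…,n_t}` equals
`t + k*`, where `k*` is the least `k` so that some oriented graph on `t + k` vertices has
outdegree `n i` at vertex `i` for `i < t` and outdegree `0` at the remaining `k` vertices. -/
theorem twoHTree_starChromaticIndex_eq (t : ℕ) (ht : 1 ≤ t)
    (n : Fin t → ℕ) (hn : Monotone n) :
    starChromaticIndex (twoHTree t n) =
      t + sInf {k : ℕ | ∃ R : Fin (t + k) → Fin (t + k) → Bool, IsOriented R ∧
        ∀ i : Fin (t + k), outDeg R i = if h : (i : ℕ) < t then n ⟨i, h⟩ else 0} := by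
  classical
  set K := {k : ℕ | ∃ R : Fin (t + k) → Fin (t + k) → Bool, IsOriented R ∧
        ∀ i : Fin (t + k), outDeg R i = if h : (i : ℕ) < t then n ⟨i, h⟩ else 0} with hKdef
  have hKne : K.Nonempty := ⟨Finset.univ.sup n, TwoH.K_nonempty t n⟩
  have hKm := Nat.sInf_mem hKne
  rw [hKdef, Set.mem_setOf_eq] at hKm
  obtain ⟨R, hor, hdeg⟩ := hKm
  obtain ⟨c, hc⟩ := TwoH.exists_coloring t (sInf K) ht n R hor hdeg
  have hmem : (t + sInf K) ∈ {k : ℕ |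
      ∃ c : Sym2 (Option (Σ i : Fin t, Option (Fin (n i)))) → Fin k,
      IsStarEdgeColoring (twoHTree t n) c} := ⟨c, hc⟩
  have h1 : starChromaticIndex (twoHTree t n) ≤ t + sInf K := Nat.sInf_le hmem
  refine le_antisymm h1 ?_
  have hCne : {k : ℕ | ∃ c : Sym2 (Option (Σ i : Fin t, Option (Fin (n i)))) → Fin k,
      IsStarEdgeColoring (twoHTree t n) c}.Nonempty := ⟨_, hmem⟩
  have hCm := Nat.sInf_mem hCne
  rw [Set.mem_setOf_eq] at hCm
  obtain ⟨c₀, hc₀⟩ := hCm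
  obtain ⟨htm, R₀, hor₀, hdeg₀⟩ := TwoH.lower_bound t _ ht n c₀ hc₀
  have hcast : t + (sInf {k : ℕ |
      ∃ c : Sym2 (Option (Σ i : Fin t, Option (Fin (n i)))) → Fin k,
      IsStarEdgeColoring (twoHTree t n) c} - t) = sInf {k : ℕ |
      ∃ c : Sym2 (Option (Σ i : Fin t, Option (Fin (n i)))) → Fin k,
      IsStarEdgeColoring (twoHTree t n) c} := by omega
  have hKmem : (sInf {k : ℕ |
      ∃ c : Sym2 (Option (Σ i : Fin t, Option (Fin (n i)))) → Fin k,
      IsStarEdgeColoring (twoHTree t n) c} - t) ∈ K := by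
    rw [hKdef, Set.mem_setOf_eq]
    refine ⟨fun x y => R₀ (Fin.cast hcast x) (Fin.cast hcast y),
      fun i j hij => hor₀ _ _ hij, ?_⟩
    intro i
    have hbij : outDeg (fun x y => R₀ (Fin.cast hcast x) (Fin.cast hcast y)) i
        = outDeg R₀ (Fin.cast hcast i) := by
      unfold outDeg
      apply Finset.card_bij (fun y _ => Fin.cast hcast y)
      · intro y hy
        simp only [Finset.mem_filter, Finset.mem_univ, true_and] at hy ⊢
        exact hy
      · intro y1 _ y2 _ h
        have h2 := congrArg Fin.val h
        exact Fin.ext h2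
      · intro b hb
        simp only [Finset.mem_filter, Finset.mem_univ, true_and] at hb
        refine ⟨Fin.cast hcast.symm b, ?_, Fin.ext rfl⟩
        simp only [Finset.mem_filter, Finset.mem_univ, true_and]
        have hbb : Fin.cast hcast (Fin.cast hcast.symm b) = b := Fin.ext rfl
        rw [hbb]
        exact hb
    rw [hbij, hdeg₀]
    simp [Fin.coe_cast]
  have h2 := Nat.sInf_le hKmem
  have h3 : starChromaticIndex (twoHTree t n) = sInf {k : ℕ |
      ∃ c : Sym2 (Option (Σ i : Fin t, Option (Fin (n i)))) → Fin k,
      IsStarEdgeColoring (twoHTree t n) c} := rfl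
  omega
end

section
/- Let T_{(r,t)} be the r-regular 2H-tree with r ≥ 1 and t ≥ 1. If t ≤ 2r − 1, then χ'_s(T_{(r,t)}) ≤ r + ⌊t/2⌋. -/
namespace TwoHAux

def mi (t i : ℕ) : ℕ := if t % 2 = 1 then t / 2 else if i < t / 2 then t / 2 else t / 2 - 1

lemma mi_le (t i : ℕ) : mi t i ≤ t / 2 := by unfold mi; split_ifs <;> omega

lemma mi_ge (t i : ℕ) : t - t / 2 - 1 ≤ mi t i := by unfold mi; split_ifs <;> omega

lemma mi_sum (t i i' : ℕ) (ht0 : 0 < t) (hge : t ≤ mi t i + mi t i') :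
    i < t / 2 ∧ i' < t / 2 ∧ mi t i = t / 2 ∧ mi t i' = t / 2 := by
  unfold mi at hge ⊢; split_ifs at hge ⊢ <;> omega

def gN (t i j : ℕ) : ℕ := if j < mi t i then (i + 1 + j) % t else t + (j - mi t i)

lemma mod_char (a t : ℕ) (ht : 0 < t) (h : a < 2 * t) :
    (a < t ∧ a % t = a) ∨ (t ≤ a ∧ a % t = a - t) := by
  rcases Nat.lt_or_ge a t with h1 | h1
  · exact Or.inl ⟨h1, Nat.mod_eq_of_lt h1⟩
  · exact Or.inr ⟨h1, by rw [Nat.mod_eq_sub_mod h1, Nat.mod_eq_of_lt (by omega)]⟩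

lemma gN_lt (r t i j : ℕ) (hr : 1 ≤ r) (h : t ≤ 2 * r - 1) (hi : i < t) (hj : j < r - 1) :
    gN t i j < r + t / 2 := by
  have h1 := mi_le t i; have h2 := mi_ge t i
  unfold gN; split_ifs with hc
  · exact (Nat.mod_lt _ (by omega)).trans_le (by omega)
  · omega

lemma gN_ne (t i j : ℕ) (hi : i < t) : gN t i j ≠ i := by
  have hm := mi_le t i
  unfold gN; split_ifs with hc
  · rcases mod_char (i + 1 + j) t (by omega) (by omega) with ⟨c1, a1⟩ | ⟨c1, a1⟩ <;>
      rw [a1] <;> omega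
  · omega

lemma gN_inj (r t i j1 j2 : ℕ) (hi : i < t) (hj1 : j1 < r - 1) (hj2 : j2 < r - 1)
    (he : gN t i j1 = gN t i j2) : j1 = j2 := by
  have hm := mi_le t i
  have ht0 : 0 < t := by omega
  unfold gN at he; split_ifs at he with h1 h2 h2
  · rcases mod_char (i + 1 + j1) t ht0 (by omega) with ⟨c1, a1⟩ | ⟨c1, a1⟩ <;>
      rcases mod_char (i + 1 + j2) t ht0 (by omega) with ⟨c2, a2⟩ | ⟨c2, a2⟩ <;>
      rw [a1, a2] at he <;> omega
  · rcases mod_char (i + 1 + j1) t ht0 (by omega) with ⟨c1, a1⟩ | ⟨c1, a1⟩ <;>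
      rw [a1] at he <;> omega
  · rcases mod_char (i + 1 + j2) t ht0 (by omega) with ⟨c2, a2⟩ | ⟨c2, a2⟩ <;>
      rw [a2] at he <;> omega
  · omega

lemma gN_bad (r t i i' j1 j2 : ℕ) (hi : i < t) (hi' : i' < t)
    (hj1 : j1 < r - 1) (hj2 : j2 < r - 1)
    (e1 : gN t i j1 = i') (e2 : gN t i' j2 = i) : False := by
  have ht0 : 0 < t := by omega
  have hm1 := mi_le t i; have hm2 := mi_le t i'
  unfold gN at e1 e2
  split_ifs at e1 with h1
  · split_ifs at e2 with h2
    · rcases mod_char (i + 1 + j1) t ht0 (by omega) with ⟨c1, a1⟩ | ⟨c1, a1⟩ <;>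
        rcases mod_char (i' + 1 + j2) t ht0 (by omega) with ⟨c2, a2⟩ | ⟨c2, a2⟩ <;>
        rw [a1] at e1 <;> rw [a2] at e2 <;>
        first
          | omega
          | (have := mi_sum t i i' ht0 (by omega); omega)
    · omega
  · omega

abbrev Vt (r t : ℕ) := Option ((i : Fin t) × Option (Fin (r - 1)))

def colN (r t : ℕ) : Vt r t → Vt r t → ℕ
  | none, none => 0
  | none, some ⟨i, _⟩ => i
  | some ⟨i, _⟩, none => i
  | some ⟨_, none⟩, some ⟨i', some j⟩ => gN t i' j
  | some ⟨i, some j⟩, some ⟨_, none⟩ => gN t i j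
  | some ⟨_, some _⟩, some ⟨_, some _⟩ => 0
  | some ⟨_, none⟩, some ⟨_, none⟩ => 0

lemma colN_symm (r t : ℕ) (x y : Vt r t) : colN r t x y = colN r t y x := by
  rcases x with _ | ⟨i, _ | j⟩ <;> rcases y with _ | ⟨i', _ | j'⟩ <;> rfl

lemma adj_cases {r t : ℕ} {x y : Vt r t} (hadj : (twoHTree t (fun _ => r - 1)).Adj x y) :
    (∃ i : Fin t, x = none ∧ y = some ⟨i, none⟩) ∨
    (∃ i : Fin t, y = none ∧ x = some ⟨i, none⟩) ∨
    (∃ (i : Fin t) (j : Fin (r - 1)), x = some ⟨i, none⟩ ∧ y = some ⟨i, some j⟩) ∨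
    (∃ (i : Fin t) (j : Fin (r - 1)), y = some ⟨i, none⟩ ∧ x = some ⟨i, some j⟩) := by
  rw [twoHTree, SimpleGraph.fromRel_adj] at hadj
  obtain ⟨-, hh | hh⟩ := hadj
  · rcases hh with ⟨hx, i, hy⟩ | ⟨i, j, hx, hy⟩
    · exact Or.inl ⟨i, hx, hy⟩
    · exact Or.inr (Or.inr (Or.inl ⟨i, j, hx, hy⟩))
  · rcases hh with ⟨hy, i, hx⟩ | ⟨i, j, hy, hx⟩
    · exact Or.inr (Or.inl ⟨i, hy, hx⟩)
    · exact Or.inr (Or.inr (Or.inr ⟨i, j, hy, hx⟩))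

lemma inj1 {r t : ℕ} {i i' : Fin t} (hh : (some ⟨i, none⟩ : Vt r t) = some ⟨i', none⟩) :
    i = i' := by simpa using hh

lemma inj2 {r t : ℕ} {i i' : Fin t} {j : Fin (r - 1)}
    (hh : (some ⟨i, none⟩ : Vt r t) = some ⟨i', some j⟩) : False := by simp at hh

lemma inj3 {r t : ℕ} {i i' : Fin t} {j j' : Fin (r - 1)}
    (hh : (some ⟨i, some j⟩ : Vt r t) = some ⟨i', some j'⟩) : i = i' ∧ j = j' := by
  simpa using hh

end TwoHAux


open TwoHAux

/-- Lemma 6.2, first case. For the `r`-regular 2H-tree `T_{(r,t)}`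
(every neighbour of the root has degree `r`, i.e. `nᵢ = r - 1`), if `t ≤ 2r - 1` then
`χ'_s(T_{(r,t)}) ≤ r + ⌊t/2⌋`. -/
theorem regular_twoHTree_star_le_of_small_t (r t : ℕ) (hr : 1 ≤ r) (ht : 1 ≤ t)
    (h : t ≤ 2 * r - 1) :
    starChromaticIndex (twoHTree t (fun _ => r - 1)) ≤ r + t / 2 := by
  have hkt : t ≤ r + t / 2 := by omega
  have hk0 : 0 < r + t / 2 := by omega
  apply Nat.sInf_le
  refine ⟨Sym2.lift ⟨fun x y => (⟨colN r t x y % (r + t / 2), Nat.mod_lt _ hk0⟩ : Fin (r + t / 2)),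
    fun x y => Fin.ext (by simp [colN_symm r t x y])⟩, ?_, ?_⟩
  · -- proper
    intro u v w huv huw hvw
    simp only [Sym2.lift_mk, ne_eq, Fin.mk.injEq]
    rcases adj_cases huv with ⟨i, rfl, rfl⟩ | ⟨i, rfl, rfl⟩ | ⟨i, j, rfl, rfl⟩ | ⟨i, j, rfl, rfl⟩
    · -- u = none, v = uᵢ
      rcases adj_cases huw with ⟨i', -, rfl⟩ | ⟨i', -, hu⟩ | ⟨i', j', hu, -⟩ | ⟨i', j', -, hu⟩
      · show ¬((i : ℕ) % (r + t / 2) = (i' : ℕ) % (r + t / 2))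
        rw [Nat.mod_eq_of_lt (lt_of_lt_of_le i.isLt hkt),
          Nat.mod_eq_of_lt (lt_of_lt_of_le i'.isLt hkt)]
        intro hh
        exact hvw (by rw [Fin.val_injective hh])
      · exact absurd hu (by simp)
      · exact absurd hu (by simp)
      · exact absurd hu (by simp)
    · -- v = none, u = uᵢ
      rcases adj_cases huw with ⟨i', hu, -⟩ | ⟨i', rfl, -⟩ | ⟨i', j', hu, rfl⟩ | ⟨i', j', -, hu⟩
      · exact absurd hu (by simp)
      · exact absurd rfl hvw
      · obtain rfl := inj1 hu
        show ¬((i : ℕ) % (r + t / 2) = gN t i j' % (r + t / 2))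
        rw [Nat.mod_eq_of_lt (lt_of_lt_of_le i.isLt hkt),
          Nat.mod_eq_of_lt (gN_lt r t i j' hr h i.isLt j'.isLt)]
        exact fun hh => gN_ne t i j' i.isLt hh.symm
      · exact (inj2 hu).elim
    · -- u = uᵢ, v = leaf i j
      rcases adj_cases huw with ⟨i', hu, -⟩ | ⟨i', rfl, hu⟩ | ⟨i', j', hu, rfl⟩ | ⟨i', j', -, hu⟩
      · exact absurd hu (by simp)
      · obtain rfl := inj1 hu
        show ¬(gN t i j % (r + t / 2) = (i : ℕ) % (r + t / 2))
        rw [Nat.mod_eq_of_lt (lt_of_lt_of_le i.isLt hkt),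
          Nat.mod_eq_of_lt (gN_lt r t i j hr h i.isLt j.isLt)]
        exact gN_ne t i j i.isLt
      · obtain rfl := inj1 hu
        show ¬(gN t i j % (r + t / 2) = gN t i j' % (r + t / 2))
        rw [Nat.mod_eq_of_lt (gN_lt r t i j hr h i.isLt j.isLt),
          Nat.mod_eq_of_lt (gN_lt r t i j' hr h i.isLt j'.isLt)]
        intro hh
        have hj : j = j' := Fin.val_injective (gN_inj r t i j j' i.isLt j.isLt j'.isLt hh)
        exact hvw (by rw [hj])
      · exact (inj2 hu).elim
    · -- v = uᵢ, u = leaf i j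
      rcases adj_cases huw with ⟨i', hu, -⟩ | ⟨i', -, hu⟩ | ⟨i', j', hu, -⟩ | ⟨i', j', rfl, hu⟩
      · exact absurd hu (by simp)
      · exact (inj2 hu.symm).elim
      · exact (inj2 hu.symm).elim
      · obtain ⟨rfl, rfl⟩ := inj3 hu
        exact absurd rfl hvw
  · -- star condition
    intro a b x y z hab hbx hxy hyz hax hay hby hbz hxz
    simp only [Sym2.lift_mk, Fin.mk.injEq]
    rcases adj_cases hbx with ⟨i, rfl, rfl⟩ | ⟨i, rfl, rfl⟩ | ⟨i, j, rfl, rfl⟩ | ⟨i, j, rfl, rfl⟩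
    · -- b = none, x = uᵢ
      rcases adj_cases hxy with ⟨i₂, hx', -⟩ | ⟨i₂, rfl, -⟩ | ⟨i₂, j₂, hx', rfl⟩ | ⟨i₂, j₂, -, hx'⟩
      · exact absurd hx' (by simp)
      · exact absurd rfl hby
      · obtain rfl := inj1 hx'
        rcases adj_cases hyz with ⟨i₃, hy', -⟩ | ⟨i₃, -, hy'⟩ | ⟨i₃, j₃, hy', -⟩ | ⟨i₃, j₃, hz', hy'⟩
        · exact absurd hy' (by simp)
        · exact (inj2 hy'.symm).elim
        · exact (inj2 hy'.symm).elim
        · obtain ⟨rfl, rfl⟩ := inj3 hy'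
          exact absurd hz'.symm hxz
      · exact (inj2 hx').elim
    · -- x = none, b = uᵢ : the real case
      rcases adj_cases hxy with ⟨i₂, -, rfl⟩ | ⟨i₂, -, hx'⟩ | ⟨i₂, j₂, hx', -⟩ | ⟨i₂, j₂, -, hx'⟩
      · rcases adj_cases hab with ⟨i₃, rfl, hb'⟩ | ⟨i₃, hb', -⟩ | ⟨i₃, j₃, -, hb'⟩ | ⟨i₃, j₃, hb', rfl⟩
        · exact absurd rfl hax
        · exact absurd hb' (by simp)
        · exact (inj2 hb').elim
        · obtain rfl := inj1 hb'
          rcases adj_cases hyz with ⟨i₄, hy', -⟩ | ⟨i₄, rfl, -⟩ | ⟨i₄, j₄, hy', rfl⟩ | ⟨i₄, j₄, -, hy'⟩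
          · exact absurd hy' (by simp)
          · exact absurd rfl hxz
          · obtain rfl := inj1 hy'
            simp only [colN]
            rintro ⟨h1, h2⟩
            rw [Nat.mod_eq_of_lt (gN_lt r t i j₃ hr h i.isLt j₃.isLt),
              Nat.mod_eq_of_lt (lt_of_lt_of_le i₂.isLt hkt)] at h1
            rw [Nat.mod_eq_of_lt (lt_of_lt_of_le i.isLt hkt),
              Nat.mod_eq_of_lt (gN_lt r t i₂ j₄ hr h i₂.isLt j₄.isLt)] at h2
            exact gN_bad r t i i₂ j₃ j₄ i.isLt i₂.isLt j₃.isLt j₄.isLt h1 h2.symm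
          · exact (inj2 hy').elim
      · exact absurd hx' (by simp)
      · exact absurd hx' (by simp)
      · exact absurd hx' (by simp)
    · -- b = uᵢ, x = leaf i j
      rcases adj_cases hxy with ⟨i₂, hx', -⟩ | ⟨i₂, -, hx'⟩ | ⟨i₂, j₂, hx', -⟩ | ⟨i₂, j₂, hy', hx'⟩
      · exact absurd hx' (by simp)
      · exact (inj2 hx'.symm).elim
      · exact (inj2 hx'.symm).elim
      · obtain ⟨rfl, rfl⟩ := inj3 hx'
        exact absurd hy'.symm hby
    · -- x = uᵢ, b = leaf i j
      rcases adj_cases hab with ⟨i₃, -, hb'⟩ | ⟨i₃, hb', -⟩ | ⟨i₃, j₃, ha', hb'⟩ | ⟨i₃, j₃, hb', -⟩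
      · exact (inj2 hb'.symm).elim
      · exact absurd hb' (by simp)
      · obtain ⟨rfl, rfl⟩ := inj3 hb'
        exact absurd ha' hax
      · exact (inj2 hb'.symm).elim
end

section
/- Let T_{(r,t)} be the r-regular 2H-tree with r ≥ 1 and t ≥ 1. If t ≥ 2r, then χ'_s(T_{(r,t)}) ≤ t. -/
def treeDepth {r t : ℕ} : Option (Σ _ : Fin t, Option (Fin (r - 1))) → ℕ
  | none => 0
  | some ⟨_, none⟩ => 1
  | some ⟨_, some _⟩ => 2

def treeCol {r t : ℕ} (ht : 0 < t) : Option (Σ _ : Fin t, Option (Fin (r - 1))) → Fin t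
  | none => ⟨0, ht⟩
  | some ⟨i, none⟩ => i
  | some ⟨i, some j⟩ => ⟨((i : ℕ) + (j : ℕ) + 1) % t, Nat.mod_lt _ ht⟩

def treeF {r t : ℕ} (ht : 0 < t) (x y : Option (Σ _ : Fin t, Option (Fin (r - 1)))) : Fin t :=
  if treeDepth x < treeDepth y then treeCol ht y
  else if treeDepth y < treeDepth x then treeCol ht x
  else ⟨0, ht⟩

lemma treeF_symm {r t : ℕ} (ht : 0 < t) (x y : Option (Σ _ : Fin t, Option (Fin (r - 1)))) :
    treeF ht x y = treeF ht y x := by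
  unfold treeF
  rcases lt_trichotomy (treeDepth x) (treeDepth y) with h | h | h
  · rw [if_pos h, if_neg (lt_asymm h), if_pos h]
  · rw [h, if_neg (lt_irrefl _), if_neg (lt_irrefl _), if_neg (lt_irrefl _), if_neg (lt_irrefl _)]
  · rw [if_neg (lt_asymm h), if_pos h, if_pos h]

lemma treeF_rm {r t : ℕ} (ht : 0 < t) (i : Fin t) :
    treeF (r := r) ht none (some ⟨i, none⟩) = i := rfl

lemma treeF_mr {r t : ℕ} (ht : 0 < t) (i : Fin t) :
    treeF (r := r) ht (some ⟨i, none⟩) none = i := rfl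

lemma treeF_ml {r t : ℕ} (ht : 0 < t) (i i' : Fin t) (j : Fin (r - 1)) :
    treeF ht (some ⟨i, none⟩) (some ⟨i', some j⟩)
      = ⟨((i' : ℕ) + (j : ℕ) + 1) % t, Nat.mod_lt _ ht⟩ := rfl

lemma treeF_lm {r t : ℕ} (ht : 0 < t) (i i' : Fin t) (j : Fin (r - 1)) :
    treeF ht (some ⟨i', some j⟩) (some ⟨i, none⟩)
      = ⟨((i' : ℕ) + (j : ℕ) + 1) % t, Nat.mod_lt _ ht⟩ := rfl

lemma adj_cases {r t : ℕ} {x y : Option (Σ _ : Fin t, Option (Fin (r - 1)))}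
    (h : (twoHTree t fun _ => r - 1).Adj x y) :
    (x = none ∧ ∃ i : Fin t, y = some ⟨i, none⟩) ∨
    (y = none ∧ ∃ i : Fin t, x = some ⟨i, none⟩) ∨
    (∃ (i : Fin t) (j : Fin (r - 1)), x = some ⟨i, none⟩ ∧ y = some ⟨i, some j⟩) ∨
    (∃ (i : Fin t) (j : Fin (r - 1)), y = some ⟨i, none⟩ ∧ x = some ⟨i, some j⟩) := by
  rw [twoHTree, SimpleGraph.fromRel_adj] at h
  obtain ⟨-, h | h⟩ := h
  · rcases h with ⟨h1, i, h2⟩ | ⟨i, j, h1, h2⟩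
    · exact Or.inl ⟨h1, i, h2⟩
    · exact Or.inr (Or.inr (Or.inl ⟨i, j, h1, h2⟩))
  · rcases h with ⟨h1, i, h2⟩ | ⟨i, j, h1, h2⟩
    · exact Or.inr (Or.inl ⟨h1, i, h2⟩)
    · exact Or.inr (Or.inr (Or.inr ⟨i, j, h1, h2⟩))

lemma mod_eq_cases {a b t : ℕ} (ha : a < 2 * t) (hb : b < 2 * t) (h : a % t = b % t) :
    a = b ∨ a = b + t ∨ b = a + t := by
  rcases Nat.lt_or_ge a t with h1 | h1 <;> rcases Nat.lt_or_ge b t with h2 | h2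
  · rw [Nat.mod_eq_of_lt h1, Nat.mod_eq_of_lt h2] at h; omega
  · rw [Nat.mod_eq_of_lt h1, Nat.mod_eq_sub_mod h2, Nat.mod_eq_of_lt (by omega)] at h; omega
  · rw [Nat.mod_eq_of_lt h2, Nat.mod_eq_sub_mod h1, Nat.mod_eq_of_lt (by omega)] at h; omega
  · rw [Nat.mod_eq_sub_mod h1, Nat.mod_eq_sub_mod h2,
      Nat.mod_eq_of_lt (by omega : a - t < t), Nat.mod_eq_of_lt (by omega : b - t < t)] at h
    omega

lemma arith1 {t i j : ℕ} (hti : i < t) (hj : j + 1 < t) (h : (i + j + 1) % t = i) : False := by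
  have h0 : i % t = i := Nat.mod_eq_of_lt hti
  rcases mod_eq_cases (by omega) (by omega) (h.trans h0.symm) with h' | h' | h' <;> omega

lemma arith2 {t i j j' : ℕ} (hti : i < t) (hj : j + 1 < t) (hj' : j' + 1 < t)
    (h : (i + j + 1) % t = (i + j' + 1) % t) : j = j' := by
  rcases mod_eq_cases (by omega) (by omega) h with h' | h' | h' <;> omega

lemma arith3 {t i i' j j' : ℕ} (hi : i < t) (hi' : i' < t) (hs : j + j' + 2 < t)
    (h1 : (i + j + 1) % t = i') (h2 : (i' + j' + 1) % t = i) : False := by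
  have e1 : i' % t = i' := Nat.mod_eq_of_lt hi'
  have e2 : i % t = i := Nat.mod_eq_of_lt hi
  rcases mod_eq_cases (by omega) (by omega) (h1.trans e1.symm) with a1 | a1 | a1 <;>
    rcases mod_eq_cases (by omega) (by omega) (h2.trans e2.symm) with a2 | a2 | a2 <;> omega

/-- Lemma 6.2, second case. For the `r`-regular 2H-tree `T_{(r,t)}`,
if `t ≥ 2r` then `χ'_s(T_{(r,t)}) ≤ t`. -/
theorem regular_twoHTree_star_le_of_large_t (r t : ℕ) (hr : 1 ≤ r) (ht : 1 ≤ t)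
    (h : 2 * r ≤ t) :
    starChromaticIndex (twoHTree t (fun _ => r - 1)) ≤ t := by
  have ht0 : 0 < t := ht
  apply Nat.sInf_le
  refine ⟨Sym2.lift ⟨treeF (r := r) ht0, treeF_symm ht0⟩, ?_, ?_⟩
  · intro u v w huv huw hvw
    simp only [Sym2.lift_mk]
    rcases adj_cases huv with ⟨rfl, i, rfl⟩ | ⟨rfl, i, rfl⟩ | ⟨i, j, rfl, rfl⟩ | ⟨i, j, rfl, rfl⟩
    · -- u = none, v = mid i
      rcases adj_cases huw with ⟨-, i', rfl⟩ | ⟨-, i', h1⟩ | ⟨i', j', h1, -⟩ | ⟨i', j', -, h1⟩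
      · rw [treeF_rm, treeF_rm]
        intro he
        apply hvw; rw [he]
      · exact absurd h1 (by simp)
      · exact absurd h1 (by simp)
      · exact absurd h1 (by simp)
    · -- v = none, u = mid i
      rcases adj_cases huw with ⟨h1, i', -⟩ | ⟨rfl, i', -⟩ | ⟨i', j', h1, rfl⟩ | ⟨i', j', -, h1⟩
      · exact absurd h1 (by simp)
      · exact absurd rfl hvw
      · simp at h1
        obtain rfl := h1
        rw [treeF_mr, treeF_ml]
        intro he
        have hev := congrArg Fin.val he
        exact arith1 i.isLt (by have := j'.isLt; omega) hev.symm
      · simp at h1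
    · -- u = mid i, v = leaf (i, j)
      rcases adj_cases huw with ⟨h1, i', -⟩ | ⟨rfl, i', -⟩ | ⟨i', j', h1, rfl⟩ | ⟨i', j', -, h1⟩
      · exact absurd h1 (by simp)
      · rw [treeF_ml, treeF_mr]
        intro he
        have hev := congrArg Fin.val he
        exact arith1 i.isLt (by have := j.isLt; omega) hev
      · simp at h1
        obtain rfl := h1
        rw [treeF_ml, treeF_ml]
        intro he
        have hev := congrArg Fin.val he
        have hjj : (j : ℕ) = (j' : ℕ) :=
          arith2 i.isLt (by have := j.isLt; omega) (by have := j'.isLt; omega) hev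
        apply hvw
        rw [show j = j' from Fin.ext hjj]
      · simp at h1
    · -- v = mid i, u = leaf (i, j)
      rcases adj_cases huw with ⟨h1, i', -⟩ | ⟨-, i', h1⟩ | ⟨i', j', h1, -⟩ | ⟨i', j', rfl, h1⟩
      · exact absurd h1 (by simp)
      · simp at h1
      · simp at h1
      · simp at h1
        obtain ⟨rfl, -⟩ := h1
        exact absurd rfl hvw
  · intro a b x y z hab hbx hxy hyz hax hay hby hbz hxz hc
    rcases adj_cases hbx with ⟨rfl, i, rfl⟩ | ⟨rfl, i, rfl⟩ | ⟨i, j, rfl, rfl⟩ | ⟨i, j, rfl, rfl⟩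
    · -- b = none, x = mid i
      rcases adj_cases hxy with ⟨h1, i', -⟩ | ⟨rfl, i', -⟩ | ⟨i', j', h1, rfl⟩ | ⟨i', j', -, h1⟩
      · exact absurd h1 (by simp)
      · exact hby rfl
      · simp at h1
        obtain rfl := h1
        -- y = leaf (i, j')
        rcases adj_cases hyz with ⟨h2, i3, -⟩ | ⟨-, i3, h2⟩ | ⟨i3, j3, h2, -⟩ | ⟨i3, j3, rfl, h2⟩
        · exact absurd h2 (by simp)
        · simp at h2
        · simp at h2
        · simp at h2
          obtain ⟨rfl, -⟩ := h2
          exact hxz rfl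
      · simp at h1
    · -- x = none, b = mid i
      rcases adj_cases hxy with ⟨-, i', rfl⟩ | ⟨-, i', h1⟩ | ⟨i', j', h1, -⟩ | ⟨i', j', -, h1⟩
      · -- y = mid i'
        rcases adj_cases hab with ⟨rfl, i2, -⟩ | ⟨h1, i2, -⟩ | ⟨i2, j2, -, h1⟩ | ⟨i2, j2, h1, rfl⟩
        · exact hax rfl
        · exact absurd h1 (by simp)
        · simp at h1
        · simp at h1
          obtain rfl := h1
          -- a = leaf (i, j2)
          rcases adj_cases hyz with ⟨h2, i4, -⟩ | ⟨rfl, i4, -⟩ | ⟨i4, j4, h2, rfl⟩ | ⟨i4, j4, -, h2⟩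
          · exact absurd h2 (by simp)
          · exact hxz rfl
          · simp at h2
            obtain rfl := h2
            -- z = leaf (i', j4)
            obtain ⟨hc1, hc2⟩ := hc
            simp only [Sym2.lift_mk] at hc1 hc2
            rw [treeF_lm, treeF_rm] at hc1
            rw [treeF_mr, treeF_ml] at hc2
            have h1n := congrArg Fin.val hc1
            have h2n := congrArg Fin.val hc2
            exact arith3 i.isLt i'.isLt
              (by have := j2.isLt; have := j4.isLt; omega) h1n h2n.symm
          · simp at h2
      · exact absurd h1.symm (by simp)
      · exact absurd h1.symm (by simp)
      · exact absurd h1.symm (by simp)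
    · -- b = mid i, x = leaf (i, j)
      rcases adj_cases hxy with ⟨h1, i', -⟩ | ⟨-, i', h1⟩ | ⟨i', j', h1, -⟩ | ⟨i', j', rfl, h1⟩
      · exact absurd h1 (by simp)
      · simp at h1
      · simp at h1
      · simp at h1
        obtain ⟨rfl, -⟩ := h1
        exact hby rfl
    · -- x = mid i, b = leaf (i, j)
      rcases adj_cases hab with ⟨-, i5, h1⟩ | ⟨h1, i5, -⟩ | ⟨i5, j5, h1, h2⟩ | ⟨i5, j5, h1, -⟩
      · simp at h1
      · exact absurd h1 (by simp)
      · simp at h2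
        obtain ⟨rfl, -⟩ := h2
        exact hax (h1.trans rfl)
      · simp at h1
end

section
/- Let T_{n₁,…,n_t} be a 2H-tree and let σ_t = n₁ + … + n_t. Then, as an inequality of rational numbers, χ'_s(T_{n₁,…,n_t}) ≥ σ_t/t + (t+1)/2. -/
/-- Any graph on a finite vertex type admits some star edge coloring (an injective one). -/
lemma exists_star_coloring {V : Type*} [Fintype V] [DecidableEq V] (G : SimpleGraph V) :
    ∃ (k : ℕ) (c : Sym2 V → Fin k), IsStarEdgeColoring G c := by
  refine ⟨Fintype.card (Sym2 V), Fintype.equivFin (Sym2 V), ?_, ?_⟩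
  · intro u v w _ _ hvw h
    have := (Fintype.equivFin (Sym2 V)).injective h
    rw [Sym2.congr_right] at this
    exact hvw this
  · rintro a b x y z _ _ _ _ hax hay _ _ _ ⟨h1, _⟩
    have := (Fintype.equivFin (Sym2 V)).injective h1
    rw [Sym2.eq_iff] at this
    rcases this with ⟨h, _⟩ | ⟨h, _⟩
    · exact hax h
    · exact hay h

lemma twoHTree_adj_root (t : ℕ) (n : Fin t → ℕ) (i : Fin t) :
    (twoHTree t n).Adj none (some ⟨i, none⟩) := by
  rw [twoHTree, SimpleGraph.fromRel_adj]
  exact ⟨by simp, Or.inl (Or.inl ⟨rfl, i, rfl⟩)⟩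

lemma twoHTree_adj_leaf (t : ℕ) (n : Fin t → ℕ) (i : Fin t) (j : Fin (n i)) :
    (twoHTree t n).Adj (some ⟨i, none⟩) (some ⟨i, some j⟩) := by
  rw [twoHTree, SimpleGraph.fromRel_adj]
  refine ⟨by simp, Or.inl (Or.inr ⟨i, j, rfl, rfl⟩)⟩

/-- The key counting bound in ℕ. -/
lemma twoHTree_count (t : ℕ) (n : Fin t → ℕ) (k : ℕ)
    (c : Sym2 (Option (Σ i : Fin t, Option (Fin (n i)))) → Fin k)
    (hc : IsStarEdgeColoring (twoHTree t n) c) :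
    2 * (∑ i, n i) + t * (t + 1) ≤ 2 * t * k := by
  classical
  let u : Option (Σ i : Fin t, Option (Fin (n i))) := none
  let U : Fin t → Option (Σ i : Fin t, Option (Fin (n i))) := fun i => some ⟨i, none⟩
  let L : ∀ i : Fin t, Fin (n i) → Option (Σ i : Fin t, Option (Fin (n i))) :=
    fun i j => some ⟨i, some j⟩
  have hUL : ∀ (i i' : Fin t) (j : Fin (n i')), U i ≠ L i' j := by
    intro i i' j h
    simp only [U, L, Option.some.injEq, Sigma.mk.inj_iff] at h
    obtain ⟨rfl, h⟩ := h
    exact Option.some_ne_none _ (eq_of_heq h).symm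
  have huU : ∀ i, u ≠ U i := by intro i h; simp [u, U] at h
  have huL : ∀ i j, u ≠ L i j := by intro i j h; simp [u, L] at h
  have hUU : ∀ i i', i ≠ i' → U i ≠ U i' := by
    intro i i' hii h
    simp only [U, Option.some.injEq, Sigma.mk.inj_iff] at h
    exact hii h.1
  have hLL : ∀ i (j j' : Fin (n i)), j ≠ j' → L i j ≠ L i j' := by
    intro i j j' hjj h
    simp only [L, Option.some.injEq, Sigma.mk.inj_iff, heq_eq_eq, Option.some.injEq] at h
    exact hjj h.2
  have hadjU : ∀ i, (twoHTree t n).Adj u (U i) := fun i => twoHTree_adj_root t n i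
  have hadjL : ∀ i j, (twoHTree t n).Adj (U i) (L i j) := fun i j => twoHTree_adj_leaf t n i j
  let col : Fin t → Fin k := fun i => c s(u, U i)
  let A : Fin t → Finset (Fin k) := fun i => Finset.univ.image (fun j => c s(U i, L i j))
  -- colors of pendant edges at `U i` are pairwise distinct
  have hAinj : ∀ i, Function.Injective (fun j : Fin (n i) => c s(U i, L i j)) := by
    intro i j j' h
    by_contra hne
    exact hc.1 (hadjL i j) (hadjL i j') (hLL i j j' hne) h
  have hAcard : ∀ i, (A i).card = n i := by
    intro i
    rw [Finset.card_image_of_injective _ (hAinj i), Finset.card_univ, Fintype.card_fin]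
  have hcolinj : Function.Injective col := by
    intro i i' h
    by_contra hne
    exact hc.1 (hadjU i) (hadjU i') (hUU i i' hne) h
  -- `col i ∉ A i`
  have hdiag : ∀ i, col i ∉ A i := by
    intro i hmem
    simp only [A, Finset.mem_image, Finset.mem_univ, true_and] at hmem
    obtain ⟨j, hj⟩ := hmem
    have h1 : c s(U i, u) = col i := by
      show c s(U i, u) = c s(u, U i); rw [Sym2.eq_swap]
    exact hc.1 ((hadjU i).symm) (hadjL i j) (huL i j) (h1.trans hj.symm)
  -- the star condition: pair asymmetry
  have hpair : ∀ i i', i ≠ i' → col i' ∈ A i → col i ∉ A i' := by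
    intro i i' hii h1 h2
    simp only [A, Finset.mem_image, Finset.mem_univ, true_and] at h1 h2
    obtain ⟨a, ha⟩ := h1
    obtain ⟨b, hb⟩ := h2
    refine hc.2 (L i a) (U i) u (U i') (L i' b)
      ((hadjL i a).symm) ((hadjU i).symm) (hadjU i') (hadjL i' b)
      (Ne.symm (huL i a)) ?_ (hUU i i' hii) ?_ (huL i' b) ⟨?_, ?_⟩
    · intro h
      simp only [L, U, Option.some.injEq, Sigma.mk.inj_iff] at h
      obtain ⟨rfl, h⟩ := h
      exact Option.some_ne_none _ (eq_of_heq h)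
    · exact hUL i i' b
    · show c s(L i a, U i) = c s(u, U i')
      rw [Sym2.eq_swap]; exact ha
    · show c s(U i, u) = c s(U i', L i' b)
      have : c s(U i, u) = col i := by
        show c s(U i, u) = c s(u, U i); rw [Sym2.eq_swap]
      rw [this, hb]
  let C : Finset (Fin k) := Finset.univ.image col
  have hCcard : C.card = t := by
    rw [Finset.card_image_of_injective _ hcolinj, Finset.card_univ, Fintype.card_fin]
  have htk : t ≤ k := by
    calc t = C.card := hCcard.symm
    _ ≤ (Finset.univ : Finset (Fin k)).card := Finset.card_le_univ C
    _ = k := by simp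
  let f : Fin t → ℕ := fun i => (A i ∩ C).card
  have hfi : ∀ i, n i ≤ (k - t) + f i := by
    intro i
    have h1 : (A i ∩ C).card + (A i \ C).card = (A i).card :=
      Finset.card_inter_add_card_sdiff _ _
    have h2 : (A i \ C).card ≤ k - t := by
      calc (A i \ C).card ≤ ((Finset.univ : Finset (Fin k)) \ C).card :=
            Finset.card_le_card (Finset.sdiff_subset_sdiff (Finset.subset_univ _) le_rfl)
      _ = k - t := by rw [Finset.card_sdiff_of_subset (Finset.subset_univ _), hCcard, Finset.card_univ,
            Fintype.card_fin]
    have h3 := hAcard i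
    have h4 : f i = (A i ∩ C).card := rfl
    omega
  have hfilter : ∀ i, f i = (Finset.univ.filter fun j => col j ∈ A i).card := by
    intro i
    have : A i ∩ C = (Finset.univ.filter fun j => col j ∈ A i).image col := by
      ext x
      simp only [Finset.mem_inter, Finset.mem_image, Finset.mem_filter, Finset.mem_univ,
        true_and, C]
      constructor
      · rintro ⟨hx, j, rfl⟩
        exact ⟨j, hx, rfl⟩
      · rintro ⟨j, hj, rfl⟩
        exact ⟨hj, j, rfl⟩
    rw [show f i = (A i ∩ C).card from rfl, this,
      Finset.card_image_of_injective _ hcolinj]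
  let g : Fin t → Fin t → ℕ := fun i j => if col j ∈ A i then 1 else 0
  have hfg : ∀ i, f i = ∑ j, g i j := by
    intro i; rw [hfilter i, Finset.card_filter]
  have hkey : ∀ i j, g i j + g j i + (if i = j then 1 else 0) ≤ 1 := by
    intro i j
    by_cases hij : i = j
    · subst hij
      have h0 : g i i = 0 := if_neg (hdiag i)
      simp [h0]
    · simp only [if_neg hij, add_zero, g]
      by_cases h1 : col j ∈ A i
      · rw [if_pos h1, if_neg (hpair i j hij h1)]
      · rw [if_neg h1]; split <;> omega
  have hsum : (∑ i, ∑ j, (g i j + g j i + (if i = j then 1 else 0)))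
      ≤ ∑ _i : Fin t, ∑ _j : Fin t, 1 := by
    refine Finset.sum_le_sum fun i _ => Finset.sum_le_sum fun j _ => hkey i j
  have hRHS : (∑ _i : Fin t, ∑ _j : Fin t, (1:ℕ)) = t * t := by simp [mul_comm]
  have hLHS : (∑ i, ∑ j, (g i j + g j i + (if i = j then 1 else 0)))
      = 2 * (∑ i, f i) + t := by
    have e1 : (∑ i, ∑ j, (g i j + g j i + (if i = j then 1 else 0)))
        = (∑ i, ∑ j, g i j) + (∑ i, ∑ j, g j i) + (∑ i : Fin t, ∑ j : Fin t,
          (if i = j then (1:ℕ) else 0)) := by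
      simp [Finset.sum_add_distrib]
    have e2 : (∑ i, ∑ j, g j i) = ∑ i, ∑ j, g i j := Finset.sum_comm
    have e3 : (∑ i : Fin t, ∑ j : Fin t, (if i = j then (1:ℕ) else 0)) = t := by
      simp [Finset.sum_ite_eq]
    rw [e1, e2, e3]
    have : (∑ i, f i) = ∑ i, ∑ j, g i j := Finset.sum_congr rfl fun i _ => hfg i
    omega
  have hFt : 2 * (∑ i, f i) + t ≤ t * t := by rw [← hLHS, ← hRHS]; exact hsum
  have hsn : (∑ i, n i) ≤ t * (k - t) + (∑ i, f i) := by
    calc (∑ i, n i) ≤ ∑ i, ((k - t) + f i) := Finset.sum_le_sum fun i _ => hfi i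
    _ = t * (k - t) + (∑ i, f i) := by
        rw [Finset.sum_add_distrib, Finset.sum_const, Finset.card_univ, Fintype.card_fin,
          smul_eq_mul]
  obtain ⟨d, rfl⟩ : ∃ d, k = t + d := ⟨k - t, by omega⟩
  have h1 : t * (t + d - t) = t * d := by congr 1; omega
  rw [h1] at hsn
  nlinarith [hsn, hFt]

/-- Theorem 6.3, lower bound. For the 2H-tree `T_{n₁,…,n_t}` with
`σ_t = n₁ + ⋯ + n_t`, we have `χ'_s(T_{n₁,…,n_t}) ≥ σ_t/t + (t+1)/2` as rationals. -/
theorem twoHTree_star_lower_bound (t : ℕ) (ht : 1 ≤ t) (n : Fin t → ℕ) (hn : Monotone n) :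
    ((∑ i, n i : ℕ) : ℚ) / (t : ℚ) + ((t : ℚ) + 1) / 2 ≤
      (starChromaticIndex (twoHTree t n) : ℚ) := by
  classical
  have hne : {k : ℕ | ∃ c : Sym2 (Option (Σ i : Fin t, Option (Fin (n i)))) → Fin k,
      IsStarEdgeColoring (twoHTree t n) c}.Nonempty := by
    obtain ⟨k, c, hc⟩ := exists_star_coloring (twoHTree t n)
    exact ⟨k, c, hc⟩
  obtain ⟨c, hc⟩ := Nat.sInf_mem hne
  have hnat := twoHTree_count t n _ c hc
  have ht0 : (0:ℚ) < (t:ℚ) := by exact_mod_cast ht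
  rw [div_add_div _ _ (ne_of_gt ht0) two_ne_zero, div_le_iff₀ (by positivity)]
  have hq : ((2 * (∑ i, n i) + t * (t + 1) : ℕ) : ℚ)
      ≤ ((2 * t * starChromaticIndex (twoHTree t n) : ℕ) : ℚ) := by exact_mod_cast hnat
  push_cast at hq ⊢
  nlinarith [hq]
end

section
/- Let T_{n₁,…,n_t} be a 2H-tree. If t ≤ 2n_t + 1, then χ'_s(T_{n₁,…,n_t}) ≤ n_t + 1 + ⌊t/2⌋. -/
/- ## Auxiliary arithmetic -/

def auxF (t Nc i j : ℕ) : ℕ :=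
  if t + j < Nc then t + j
  else if i + 1 + (t + j - Nc) < t then i + 1 + (t + j - Nc)
  else i + 1 + (t + j - Nc) - t

lemma auxF_spec (t m i j : ℕ) (hi : i < t) (hj : j < m) (ht : t ≤ 2 * m + 1) :
    (auxF t (m + 1 + t / 2) i j = t + j ∧ t + j < m + 1 + t / 2) ∨
    (m + 1 + t / 2 ≤ t + j ∧ ∃ d, 1 ≤ d ∧ 2 * d < t ∧ d = 1 + (t + j - (m + 1 + t / 2)) ∧
      (auxF t (m + 1 + t / 2) i j = i + d ∨ auxF t (m + 1 + t / 2) i j + t = i + d) ∧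
      auxF t (m + 1 + t / 2) i j < t) := by
  unfold auxF
  split_ifs with h1 h2
  · exact Or.inl ⟨rfl, h1⟩
  · exact Or.inr ⟨by omega, 1 + (t + j - (m + 1 + t / 2)), by omega, by omega, rfl,
      Or.inl (by omega), by omega⟩
  · exact Or.inr ⟨by omega, 1 + (t + j - (m + 1 + t / 2)), by omega, by omega, rfl,
      Or.inr (by omega), by omega⟩

lemma auxF_lt (t m i j : ℕ) (hi : i < t) (hj : j < m) (ht : t ≤ 2 * m + 1) :
    auxF t (m + 1 + t / 2) i j < m + 1 + t / 2 := by
  rcases auxF_spec t m i j hi hj ht with ⟨e, hlt⟩ | ⟨_, d, _, _, _, _, hlt⟩ <;> omega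

lemma auxF_ne (t m i j : ℕ) (hi : i < t) (hj : j < m) (ht : t ≤ 2 * m + 1) :
    auxF t (m + 1 + t / 2) i j ≠ i := by
  rcases auxF_spec t m i j hi hj ht with ⟨e, hlt⟩ | ⟨_, d, h1, h2, _, h4, h5⟩ <;> omega

lemma auxF_inj (t m i j j' : ℕ) (hi : i < t) (hj : j < m) (hj' : j' < m) (ht : t ≤ 2 * m + 1)
    (e : auxF t (m + 1 + t / 2) i j = auxF t (m + 1 + t / 2) i j') : j = j' := by
  rcases auxF_spec t m i j hi hj ht with ⟨e1, hlt1⟩ | ⟨g1, d, hd1, hd2, hd3, hd4, hd5⟩ <;>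
    rcases auxF_spec t m i j' hi hj' ht with ⟨e2, hlt2⟩ | ⟨g2, d', hd1', hd2', hd3', hd4', hd5'⟩ <;>
    omega

lemma auxF_conflict (t m i i' j j' : ℕ) (hi : i < t) (hi' : i' < t) (hj : j < m) (hj' : j' < m)
    (ht : t ≤ 2 * m + 1)
    (e1 : auxF t (m + 1 + t / 2) i j = i') (e2 : auxF t (m + 1 + t / 2) i' j' = i) : False := by
  rcases auxF_spec t m i j hi hj ht with ⟨f1, hlt1⟩ | ⟨g1, d, hd1, hd2, hd3, hd4, hd5⟩ <;>
    rcases auxF_spec t m i' j' hi' hj' ht with ⟨f2, hlt2⟩ | ⟨g2, d', hd1', hd2', hd3', hd4', hd5'⟩ <;>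
    omega

/- ## The colouring function -/

def auxG (t : ℕ) (n : Fin t → ℕ) (Nc : ℕ) :
    Option (Σ i : Fin t, Option (Fin (n i))) → Option (Σ i : Fin t, Option (Fin (n i))) → ℕ
  | none, some ⟨i, _⟩ => i.1
  | some ⟨i, _⟩, none => i.1
  | some ⟨_, none⟩, some ⟨i, some j⟩ => auxF t Nc i.1 j.1
  | some ⟨i, some j⟩, some ⟨_, none⟩ => auxF t Nc i.1 j.1
  | _, _ => 0

lemma auxG_symm (t : ℕ) (n : Fin t → ℕ) (Nc : ℕ) (x y : Option (Σ i : Fin t, Option (Fin (n i)))) :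
    auxG t n Nc x y = auxG t n Nc y x := by
  rcases x with _ | ⟨i, _ | j⟩ <;> rcases y with _ | ⟨i', _ | j'⟩ <;> rfl

/- ## Structure of the tree -/

def lvl {t : ℕ} {n : Fin t → ℕ} : Option (Σ i : Fin t, Option (Fin (n i))) → ℕ
  | none => 0
  | some ⟨_, none⟩ => 1
  | some ⟨_, some _⟩ => 2

def idx {t : ℕ} {n : Fin t → ℕ} : Option (Σ i : Fin t, Option (Fin (n i))) → ℕ
  | none => 0
  | some s => s.1.1

lemma fst_eq {t : ℕ} {n : Fin t → ℕ} {i i' : Fin t} {o : Option (Fin (n i))} {o' : Option (Fin (n i'))}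
    (h : (some ⟨i, o⟩ : Option (Σ i : Fin t, Option (Fin (n i)))) = some ⟨i', o'⟩) : i = i' :=
  Fin.ext (congrArg idx h)

lemma node_ne_leaf {t : ℕ} {n : Fin t → ℕ} {i i' : Fin t} {j : Fin (n i')} :
    (some ⟨i, none⟩ : Option (Σ i : Fin t, Option (Fin (n i)))) ≠ some ⟨i', some j⟩ :=
  fun h => by simpa [lvl] using congrArg lvl h

lemma twoHTree_adj {t : ℕ} {n : Fin t → ℕ} {x y : Option (Σ i : Fin t, Option (Fin (n i)))}
    (hxy : (twoHTree t n).Adj x y) :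
    (∃ i : Fin t, x = none ∧ y = some ⟨i, none⟩) ∨
    (∃ i : Fin t, y = none ∧ x = some ⟨i, none⟩) ∨
    (∃ (i : Fin t) (j : Fin (n i)), x = some ⟨i, none⟩ ∧ y = some ⟨i, some j⟩) ∨
    (∃ (i : Fin t) (j : Fin (n i)), y = some ⟨i, none⟩ ∧ x = some ⟨i, some j⟩) := by
  rw [twoHTree, SimpleGraph.fromRel_adj] at hxy
  obtain ⟨-, h | h⟩ := hxy
  · rcases h with ⟨hx, i, hy⟩ | ⟨i, j, hx, hy⟩
    · exact Or.inl ⟨i, hx, hy⟩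
    · exact Or.inr (Or.inr (Or.inl ⟨i, j, hx, hy⟩))
  · rcases h with ⟨hy, i, hx⟩ | ⟨i, j, hy, hx⟩
    · exact Or.inr (Or.inl ⟨i, hy, hx⟩)
    · exact Or.inr (Or.inr (Or.inr ⟨i, j, hy, hx⟩))

lemma walk_shape {t : ℕ} {n : Fin t → ℕ} {a b x y z : Option (Σ i : Fin t, Option (Fin (n i)))}
    (hab : (twoHTree t n).Adj a b) (hbx : (twoHTree t n).Adj b x)
    (hxy : (twoHTree t n).Adj x y) (hyz : (twoHTree t n).Adj y z)
    (hax : a ≠ x) (hby : b ≠ y) (hxz : x ≠ z) :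
    ∃ (i i' : Fin t) (j : Fin (n i)) (j' : Fin (n i')), i ≠ i' ∧
      a = some ⟨i, some j⟩ ∧ b = some ⟨i, none⟩ ∧ x = none ∧
      y = some ⟨i', none⟩ ∧ z = some ⟨i', some j'⟩ := by
  rcases twoHTree_adj hbx with ⟨i, hb, hx⟩ | ⟨i, hx, hb⟩ | ⟨i, j, hb, hx⟩ | ⟨i, j, hx, hb⟩
  · subst hb; subst hx
    rcases twoHTree_adj hxy with ⟨i3, h1, h2⟩ | ⟨i3, h1, h2⟩ | ⟨i3, j3, h1, h2⟩ | ⟨i3, j3, h1, h2⟩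
    · exact absurd h1 (by simp)
    · exact absurd h1.symm hby
    · obtain rfl : i3 = i := (fst_eq h1).symm
      subst h2
      rcases twoHTree_adj hyz with ⟨i4, h5, h6⟩ | ⟨i4, h5, h6⟩ | ⟨i4, j4, h5, h6⟩ | ⟨i4, j4, h5, h6⟩
      · exact absurd h5 (by simp)
      · exact absurd h6.symm node_ne_leaf
      · exact absurd h5.symm node_ne_leaf
      · exact (hxz (by rw [h5, (fst_eq h6).symm])).elim
    · exact absurd h2 node_ne_leaf
  · subst hx; subst hb
    rcases twoHTree_adj hab with ⟨i1, h1, h2⟩ | ⟨i1, h1, h2⟩ | ⟨i1, j1, h1, h2⟩ | ⟨i1, j1, h1, h2⟩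
    · exact absurd h1 hax
    · exact absurd h1 (by simp)
    · exact absurd h2 node_ne_leaf
    · obtain rfl : i1 = i := (fst_eq h1).symm
      rcases twoHTree_adj hxy with ⟨i3, h3, h4⟩ | ⟨i3, h3, h4⟩ | ⟨i3, j3, h3, h4⟩ | ⟨i3, j3, h3, h4⟩
      · subst h4
        rcases twoHTree_adj hyz with ⟨i4, h5, h6⟩ | ⟨i4, h5, h6⟩ | ⟨i4, j4, h5, h6⟩ | ⟨i4, j4, h5, h6⟩
        · exact absurd h5 (by simp)
        · exact absurd h5.symm hxz
        · obtain rfl : i4 = i3 := (fst_eq h5).symm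
          refine ⟨i1, i4, j1, j4, fun e => hby (by rw [e]), h2, rfl, rfl, rfl, h6⟩
        · exact absurd h6 node_ne_leaf
      · exact absurd h4 (by simp)
      · exact absurd h3 (by simp)
      · exact absurd h4 (by simp)
  · subst hb; subst hx
    rcases twoHTree_adj hxy with ⟨i3, h1, h2⟩ | ⟨i3, h1, h2⟩ | ⟨i3, j3, h1, h2⟩ | ⟨i3, j3, h1, h2⟩
    · exact absurd h1 (by simp)
    · exact absurd h2.symm node_ne_leaf
    · exact absurd h1.symm node_ne_leaf
    · obtain rfl : i3 = i := (fst_eq h2).symm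
      exact absurd h1.symm hby
  · subst hx; subst hb
    rcases twoHTree_adj hab with ⟨i1, h1, h2⟩ | ⟨i1, h1, h2⟩ | ⟨i1, j1, h1, h2⟩ | ⟨i1, j1, h1, h2⟩
    · exact absurd h2.symm node_ne_leaf
    · exact absurd h1 (by simp)
    · obtain rfl : i1 = i := (fst_eq h2).symm
      exact absurd h1 hax
    · exact absurd h1.symm node_ne_leaf

/- ## Main existence lemma -/

lemma main_aux (t : ℕ) (ht : 1 ≤ t) (n : Fin t → ℕ) (M : ℕ)
    (hM : ∀ i, n i ≤ M) (h : t ≤ 2 * M + 1) :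
    ∃ c : Sym2 (Option (Σ i : Fin t, Option (Fin (n i)))) → Fin (M + 1 + t / 2),
      IsStarEdgeColoring (twoHTree t n) c := by
  have htN : t ≤ M + 1 + t / 2 := by omega
  have hGlt : ∀ x y, auxG t n (M + 1 + t / 2) x y < M + 1 + t / 2 := by
    rintro (_ | ⟨i, _ | j⟩) (_ | ⟨i', _ | j'⟩) <;> simp only [auxG] <;>
      first
        | omega
        | exact lt_of_lt_of_le (Fin.is_lt _) htN
        | exact auxF_lt t M _ _ (Fin.is_lt _) (lt_of_lt_of_le (Fin.is_lt _) (hM _)) h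
  refine ⟨Sym2.lift ⟨fun x y => ⟨auxG t n (M + 1 + t / 2) x y, hGlt x y⟩,
    fun x y => Fin.ext (auxG_symm t n (M + 1 + t / 2) x y)⟩, ?_, ?_⟩
  · intro u v w huv huw hvw
    simp only [Sym2.lift_mk, ne_eq, Fin.mk.injEq]
    rcases twoHTree_adj huv with ⟨i, hu, hv⟩ | ⟨i, hv, hu⟩ | ⟨i, j, hu, hv⟩ | ⟨i, j, hv, hu⟩ <;>
      rcases twoHTree_adj huw with ⟨i', hu', hw⟩ | ⟨i', hw, hu'⟩ | ⟨i', j', hu', hw⟩ | ⟨i', j', hw, hu'⟩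
    -- (1,1)
    · subst hu; subst hv; subst hw
      simp only [auxG]
      exact fun e => hvw (by rw [Fin.ext e])
    -- (1,2)
    · subst hu; exact absurd hu'.symm (by simp)
    -- (1,3)
    · subst hu; exact absurd hu'.symm (by simp)
    -- (1,4)
    · subst hu; exact absurd hu'.symm (by simp)
    -- (2,1)
    · subst hu; exact absurd hu' (by simp)
    -- (2,2)
    · exact absurd (hv.trans hw.symm) hvw
    -- (2,3)
    · subst hu; subst hv; subst hw
      obtain rfl : i' = i := (fst_eq hu').symm
      simp only [auxG]
      exact fun e => auxF_ne t M i'.1 j'.1 i'.2 (lt_of_lt_of_le (Fin.is_lt _) (hM _)) h e.symm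
    -- (2,4)
    · subst hu; exact absurd hu' node_ne_leaf
    -- (3,1)
    · subst hu; exact absurd hu' (by simp)
    -- (3,2)
    · subst hu; subst hv; subst hw
      obtain rfl : i' = i := (fst_eq hu').symm
      simp only [auxG]
      exact fun e => auxF_ne t M i'.1 j.1 i'.2 (lt_of_lt_of_le (Fin.is_lt _) (hM _)) h e
    -- (3,3)
    · subst hu; subst hv; subst hw
      obtain rfl : i' = i := (fst_eq hu').symm
      simp only [auxG]
      intro e
      have := auxF_inj t M i'.1 j.1 j'.1 i'.2 (lt_of_lt_of_le (Fin.is_lt _) (hM _))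
        (lt_of_lt_of_le (Fin.is_lt _) (hM _)) h e
      exact hvw (by rw [Fin.ext this])
    -- (3,4)
    · subst hu; exact absurd hu' node_ne_leaf
    -- (4,1)
    · subst hu; exact absurd hu'.symm (by simp)
    -- (4,2)
    · subst hu; exact absurd hu'.symm node_ne_leaf
    -- (4,3)
    · subst hu; exact absurd hu'.symm node_ne_leaf
    -- (4,4)
    · subst hu
      obtain rfl : i' = i := (fst_eq hu').symm
      exact absurd (hv.trans hw.symm) hvw
  · intro a b x y z hab hbx hxy hyz hax hay hby hbz hxz
    obtain ⟨i, i', j, j', hii, rfl, rfl, rfl, rfl, rfl⟩ :=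
      walk_shape hab hbx hxy hyz hax hby hxz
    simp only [Sym2.lift_mk, Fin.mk.injEq, auxG]
    rintro ⟨h1, h2⟩
    exact auxF_conflict t M i.1 i'.1 j.1 j'.1 i.2 i'.2
      (lt_of_lt_of_le (Fin.is_lt _) (hM _)) (lt_of_lt_of_le (Fin.is_lt _) (hM _)) h h1 h2.symm

/-- Theorem 6.3, first upper bound. For the 2H-tree `T_{n₁,…,n_t}`,
if `t ≤ 2·n_t + 1` then `χ'_s(T_{n₁,…,n_t}) ≤ n_t + 1 + ⌊t/2⌋`. -/
theorem twoHTree_star_upper_bound_small_t (t : ℕ) (ht : 1 ≤ t) (n : Fin t → ℕ)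
    (hn : Monotone n) (h : t ≤ 2 * n ⟨t - 1, by omega⟩ + 1) :
    starChromaticIndex (twoHTree t n) ≤ n ⟨t - 1, by omega⟩ + 1 + t / 2 := by
  have htc : t - 1 < t := by omega
  have hmle : ∀ i : Fin t, n i ≤ n ⟨t - 1, htc⟩ := by
    intro i
    apply hn
    rw [Fin.le_def]
    have := i.2
    simp only [Fin.val_mk]
    omega
  exact Nat.sInf_le (main_aux t ht n (n ⟨t - 1, htc⟩) hmle h)
end

section
/- Let T_{n₁,…,n_t} be a 2H-tree, let σ_t = n₁ + … + n_t, and let k be a nonnegative integer. If T_{n₁,…,n_t} admits a star edge coloring with t + k colors, then σ_t ≤ t(t−1)/2 + t·k. -/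
/-- counting bound in the proof of Theorem 6.3. If the 2H-tree
`T_{n₁,…,n_t}` admits a star edge coloring with `t + k` colors, then
`σ_t ≤ t(t-1)/2 + t·k` where `σ_t = n₁ + ⋯ + n_t`. -/
theorem twoHTree_star_coloring_counting (t k : ℕ) (ht : 1 ≤ t) (n : Fin t → ℕ)
    (hn : Monotone n)
    (h : ∃ c : Sym2 (Option (Σ i : Fin t, Option (Fin (n i)))) → Fin (t + k),
        IsStarEdgeColoring (twoHTree t n) c) :
    ∑ i, n i ≤ t * (t - 1) / 2 + t * k := by
  classical
  obtain ⟨c, hc⟩ := h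
  set G := twoHTree t n with hG
  set u : Fin t → Option (Σ i : Fin t, Option (Fin (n i))) := fun i => some ⟨i, none⟩ with hu
  set lf : (i : Fin t) → Fin (n i) → Option (Σ i : Fin t, Option (Fin (n i))) :=
    fun i j => some ⟨i, some j⟩ with hlf
  have hadj1 : ∀ i, G.Adj none (u i) := by
    intro i
    simp only [hG, hu, twoHTree, SimpleGraph.fromRel_adj]
    exact ⟨by simp, Or.inl (Or.inl ⟨trivial, i, rfl⟩)⟩
  have hadj2 : ∀ i j, G.Adj (u i) (lf i j) := by
    intro i j
    simp only [hG, hu, hlf, twoHTree, SimpleGraph.fromRel_adj]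
    exact ⟨by simp, Or.inl (Or.inr ⟨i, j, rfl, rfl⟩)⟩
  have huinj : Function.Injective u := by
    intro i j hij
    simp only [hu, Option.some.injEq, Sigma.mk.inj_iff] at hij
    exact hij.1
  have hune : ∀ i i' j', u i ≠ lf i' j' := by
    intro i i' j' hij
    simp only [hu, hlf, Option.some.injEq, Sigma.mk.inj_iff] at hij
    obtain ⟨rfl, h2⟩ := hij
    exact absurd (eq_of_heq h2) (by simp)
  set r : Fin t → Fin (t + k) := fun i => c s(none, u i) with hr
  set L : (i : Fin t) → Fin (n i) → Fin (t + k) := fun i j => c s(u i, lf i j) with hL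
  have hrinj : Function.Injective r := by
    intro i j hij
    by_contra hne
    exact hc.1 (hadj1 i) (hadj1 j) (fun e => hne (huinj e)) hij
  have hLinj : ∀ i, Function.Injective (L i) := by
    intro i j j' hjj'
    by_contra hne
    refine hc.1 (hadj2 i j) (hadj2 i j') ?_ hjj'
    simp [hlf, hne]
  have hLr : ∀ i j, L i j ≠ r i := by
    intro i j hij
    refine hc.1 (hadj2 i j) (hadj1 i).symm ?_ ?_
    · simp [hlf]
    · show L i j = c s(u i, none)
      rw [hij]
      show c s(none, u i) = c s(u i, none)
      exact congrArg c Sym2.eq_swap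
  have hstar : ∀ i j, i ≠ j → ∀ j' j'', ¬(L i j' = r j ∧ r i = L j j'') := by
    rintro i j hij j' j'' ⟨e1, e2⟩
    refine hc.2 (lf i j') (u i) none (u j) (lf j j'') (hadj2 i j').symm (hadj1 i).symm
      (hadj1 j) (hadj2 j j'') (by simp [hlf]) ?_ ?_ ?_ (by simp [hlf]) ⟨?_, ?_⟩
    · exact fun e => (hune j i j') e.symm
    · exact fun e => hij (huinj e)
    · exact hune i j j''
    · rw [Sym2.eq_swap]; exact e1
    · rw [Sym2.eq_swap]; exact e2
  have key : ∀ i, n i = (Finset.univ.image (L i)).card := by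
    intro i
    rw [Finset.card_image_of_injective _ (hLinj i), Finset.card_univ, Fintype.card_fin]
  have hσ : ∑ i, n i
      = ∑ x : Fin (t + k), (Finset.univ.filter (fun i => x ∈ Finset.univ.image (L i))).card := by
    calc ∑ i, n i = ∑ i : Fin t, (Finset.univ.image (L i)).card :=
          Finset.sum_congr rfl (fun i _ => key i)
      _ = ∑ i : Fin t, ∑ x : Fin (t + k), if x ∈ Finset.univ.image (L i) then 1 else 0 := by
          refine Finset.sum_congr rfl (fun i _ => ?_)
          rw [Finset.sum_ite_mem, Finset.univ_inter, Finset.card_eq_sum_ones]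
      _ = ∑ x : Fin (t + k), ∑ i : Fin t, if x ∈ Finset.univ.image (L i) then 1 else 0 :=
          Finset.sum_comm
      _ = _ := by
          refine Finset.sum_congr rfl (fun x _ => ?_)
          rw [Finset.card_filter]
  set R : Finset (Fin (t + k)) := Finset.univ.image r with hR
  have hsplit : ∑ x : Fin (t + k), (Finset.univ.filter (fun i => x ∈ Finset.univ.image (L i))).card
      = (∑ x ∈ R, (Finset.univ.filter (fun i => x ∈ Finset.univ.image (L i))).card)
        + ∑ x ∈ Rᶜ, (Finset.univ.filter (fun i => x ∈ Finset.univ.image (L i))).card :=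
    (Finset.sum_add_sum_compl R _).symm
  have hb2 : ∑ x ∈ Rᶜ, (Finset.univ.filter (fun i => x ∈ Finset.univ.image (L i))).card
      ≤ k * t := by
    have hRcard : Rᶜ.card = k := by
      rw [Finset.card_compl, hR, Finset.card_image_of_injective _ hrinj, Finset.card_univ,
        Fintype.card_fin, Fintype.card_fin, Nat.add_sub_cancel_left]
    calc ∑ x ∈ Rᶜ, (Finset.univ.filter (fun i => x ∈ Finset.univ.image (L i))).card
        ≤ Rᶜ.card * t := by
          refine Finset.sum_le_card_nsmul _ _ t (fun x _ => ?_)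
          simpa using (Finset.card_filter_le Finset.univ
            (fun i => x ∈ Finset.univ.image (L i)))
      _ = k * t := by rw [hRcard]
  set D : Finset (Fin t × Fin t) := Finset.univ.filter (fun p => ∃ j', L p.1 j' = r p.2) with hD
  have hb1 : ∑ x ∈ R, (Finset.univ.filter (fun i => x ∈ Finset.univ.image (L i))).card
      = D.card := by
    rw [hR, Finset.sum_image (fun a _ b _ e => hrinj e)]
    rw [hD, Finset.card_filter, Fintype.sum_prod_type_right]
    refine Finset.sum_congr rfl (fun j _ => ?_)
    rw [Finset.card_filter]
    refine Finset.sum_congr rfl (fun i _ => ?_)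
    congr 1
    simp only [Finset.mem_image, Finset.mem_univ, true_and, eq_iff_iff]
  have hDne : ∀ p ∈ D, p.1 ≠ p.2 := by
    rintro ⟨i, j⟩ hp he
    simp only at he
    subst he
    simp only [hD, Finset.mem_filter] at hp
    obtain ⟨-, j', hj'⟩ := hp
    exact hLr i j' hj'
  have hDcard : D.card ≤ t.choose 2 := by
    have hinj : Set.InjOn (fun p : Fin t × Fin t => ({p.1, p.2} : Finset (Fin t))) D := by
      rintro ⟨i, j⟩ hp ⟨i', j'⟩ hq he
      simp only at he
      have he' : ({i, j} : Set (Fin t)) = {i', j'} := by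
        have := congrArg (fun s : Finset (Fin t) => (s : Set (Fin t))) he
        simpa using this
      rcases Set.pair_eq_pair_iff.mp he' with ⟨rfl, rfl⟩ | ⟨rfl, rfl⟩
      · rfl
      · exfalso
        simp only [hD, Finset.mem_coe, Finset.mem_filter] at hp hq
        obtain ⟨-, a, ha⟩ := hp
        obtain ⟨-, b, hb⟩ := hq
        have hne : i ≠ j := by
          rintro rfl
          exact hLr i b hb
        exact hstar i j hne a b ⟨ha, hb.symm⟩
    calc D.card = (D.image (fun p : Fin t × Fin t => ({p.1, p.2} : Finset (Fin t)))).card :=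
          (Finset.card_image_of_injOn hinj).symm
      _ ≤ (Finset.univ.powersetCard 2).card := by
          refine Finset.card_le_card (fun s hs => ?_)
          simp only [Finset.mem_image] at hs
          obtain ⟨p, hp, rfl⟩ := hs
          rw [Finset.mem_powersetCard]
          exact ⟨Finset.subset_univ _, Finset.card_pair (hDne p hp)⟩
      _ = t.choose 2 := by
          rw [Finset.card_powersetCard, Finset.card_univ, Fintype.card_fin]
  rw [hσ, hsplit, hb1]
  calc D.card + ∑ x ∈ Rᶜ, (Finset.univ.filter (fun i => x ∈ Finset.univ.image (L i))).card
      ≤ t.choose 2 + k * t := Nat.add_le_add hDcard hb2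
    _ = t * (t - 1) / 2 + t * k := by rw [Nat.choose_two_right, Nat.mul_comm k t]
end

section
/- Let T_{(r,t)} be the r-regular 2H-tree with r ≥ 1 and t ≥ 1. If t ≥ 2r, then χ'_s(T_{(r,t)}) = t. -/
namespace StarAux

variable {r t : ℕ}

abbrev V (r t : ℕ) := Option (Σ _i : Fin t, Option (Fin (r - 1)))

def colVal : V r t → V r t → ℕ
  | none, none => 0
  | none, some ⟨i, _⟩ => i.1
  | some ⟨i, _⟩, none => i.1
  | some ⟨_, none⟩, some ⟨_, none⟩ => 0
  | some ⟨i, none⟩, some ⟨_, some j⟩ => i.1 + j.1 + 1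
  | some ⟨_, some j⟩, some ⟨i, none⟩ => i.1 + j.1 + 1
  | some ⟨_, some _⟩, some ⟨_, some _⟩ => 0

lemma colVal_symm (x y : V r t) : colVal x y = colVal y x := by
  rcases x with _ | ⟨i, _ | j⟩ <;> rcases y with _ | ⟨i', _ | j'⟩ <;> simp [colVal]

def col (ht : 0 < t) : Sym2 (V r t) → Fin t :=
  Sym2.lift ⟨fun x y => ⟨colVal x y % t, Nat.mod_lt _ ht⟩,
    fun x y => by simp [colVal_symm x y]⟩

lemma col_mk (ht : 0 < t) (x y : V r t) :
    col ht s(x, y) = ⟨colVal x y % t, Nat.mod_lt _ ht⟩ := rfl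

lemma adj_iff {x y : V r t} :
    (twoHTree t fun _ => r - 1).Adj x y ↔
      (x = none ∧ ∃ i : Fin t, y = some ⟨i, none⟩) ∨
      (y = none ∧ ∃ i : Fin t, x = some ⟨i, none⟩) ∨
      (∃ (i : Fin t) (j : Fin (r - 1)), x = some ⟨i, none⟩ ∧ y = some ⟨i, some j⟩) ∨
      (∃ (i : Fin t) (j : Fin (r - 1)), y = some ⟨i, none⟩ ∧ x = some ⟨i, some j⟩) := by
  rw [twoHTree, SimpleGraph.fromRel_adj]
  constructor
  · rintro ⟨hne, (⟨rfl, i, rfl⟩ | ⟨i, j, rfl, rfl⟩) | (⟨rfl, i, rfl⟩ | ⟨i, j, rfl, rfl⟩)⟩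
    · exact Or.inl ⟨rfl, i, rfl⟩
    · exact Or.inr (Or.inr (Or.inl ⟨i, j, rfl, rfl⟩))
    · exact Or.inr (Or.inl ⟨rfl, i, rfl⟩)
    · exact Or.inr (Or.inr (Or.inr ⟨i, j, rfl, rfl⟩))
  · rintro (⟨rfl, i, rfl⟩ | ⟨rfl, i, rfl⟩ | ⟨i, j, rfl, rfl⟩ | ⟨i, j, rfl, rfl⟩)
    · exact ⟨by simp, Or.inl (Or.inl ⟨rfl, i, rfl⟩)⟩
    · exact ⟨by simp, Or.inr (Or.inl ⟨rfl, i, rfl⟩)⟩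
    · exact ⟨by simp, Or.inl (Or.inr ⟨i, j, rfl, rfl⟩)⟩
    · exact ⟨by simp, Or.inr (Or.inr ⟨i, j, rfl, rfl⟩)⟩

lemma adj_none {y : V r t} (h : (twoHTree t fun _ => r - 1).Adj none y) :
    ∃ i : Fin t, y = some ⟨i, none⟩ := by
  rw [adj_iff] at h
  rcases h with ⟨_, i, rfl⟩ | ⟨h, _⟩ | ⟨i, j, h, _⟩ | ⟨i, j, _, h⟩ <;> first | exact ⟨_, rfl⟩ | simp_all

lemma adj_mid {i : Fin t} {y : V r t}
    (h : (twoHTree t fun _ => r - 1).Adj (some ⟨i, none⟩) y) :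
    y = none ∨ ∃ j : Fin (r - 1), y = some ⟨i, some j⟩ := by
  rw [adj_iff] at h
  rcases h with ⟨h, _⟩ | ⟨rfl, _⟩ | ⟨i', j, h, rfl⟩ | ⟨i', j, rfl, h⟩ <;> simp_all

lemma adj_leaf {i : Fin t} {j : Fin (r - 1)} {y : V r t}
    (h : (twoHTree t fun _ => r - 1).Adj (some ⟨i, some j⟩) y) :
    y = some ⟨i, none⟩ := by
  rw [adj_iff] at h
  rcases h with ⟨h, _⟩ | ⟨rfl, i', h⟩ | ⟨i', j', h, _⟩ | ⟨i', j', rfl, h⟩ <;> simp_all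

lemma mod_small_cases {a t : ℕ} (h : a < 2 * t) : a % t = a ∨ a % t + t = a := by
  rcases Nat.lt_or_ge a t with h' | h'
  · left; exact Nat.mod_eq_of_lt h'
  · right
    rw [Nat.mod_eq_sub_mod h', Nat.mod_eq_of_lt (by omega)]
    omega

lemma isStar (hr : 1 ≤ r) (h2 : 2 * r ≤ t) (ht : 0 < t) :
    IsStarEdgeColoring (twoHTree t fun _ => r - 1) (col (r := r) ht) := by
  constructor
  · intro u v w huv huw hvw
    rcases u with _ | ⟨i, _ | j⟩
    · obtain ⟨i, rfl⟩ := adj_none huv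
      obtain ⟨i', rfl⟩ := adj_none huw
      have hii : i ≠ i' := by simpa using hvw
      simp only [col_mk, Fin.mk.injEq, ne_eq, colVal]
      have := i.2; have := i'.2
      have := Nat.mod_eq_of_lt i.2; have := Nat.mod_eq_of_lt i'.2
      intro hc
      exact hii (Fin.ext (by omega))
    · rcases adj_mid huv with rfl | ⟨j, rfl⟩ <;> rcases adj_mid huw with rfl | ⟨j', rfl⟩
      · exact absurd rfl hvw
      · simp only [col_mk, Fin.mk.injEq, ne_eq, colVal]
        have := i.2; have := j'.2
        have := Nat.mod_eq_of_lt i.2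
        intro hc
        rcases mod_small_cases (t := t) (a := i.1 + j'.1 + 1) (by omega) with h' | h' <;> omega
      · simp only [col_mk, Fin.mk.injEq, ne_eq, colVal]
        have := i.2; have := j.2
        have := Nat.mod_eq_of_lt i.2
        intro hc
        rcases mod_small_cases (t := t) (a := i.1 + j.1 + 1) (by omega) with h' | h' <;> omega
      · have hjj : j ≠ j' := by simpa using hvw
        simp only [col_mk, Fin.mk.injEq, ne_eq, colVal]
        have := i.2; have := j.2; have := j'.2
        intro hc
        rcases mod_small_cases (t := t) (a := i.1 + j.1 + 1) (by omega) with h' | h' <;>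
          rcases mod_small_cases (t := t) (a := i.1 + j'.1 + 1) (by omega) with h'' | h'' <;>
          exact hjj (Fin.ext (by omega))
    · have h1 := adj_leaf huv
      have h2' := adj_leaf huw
      exact absurd (h1.trans h2'.symm) hvw
  · intro a b x y z hab hbx hxy hyz hax hay hby hbz hxz hcc
    obtain ⟨h1, h2⟩ := hcc
    rcases x with _ | ⟨i, _ | j⟩
    · -- x = none
      obtain ⟨ib, rfl⟩ := adj_none ((twoHTree t fun _ => r - 1).adj_symm hbx)
      obtain ⟨iy, rfl⟩ := adj_none hxy
      rcases adj_mid ((twoHTree t fun _ => r - 1).adj_symm hab) with rfl | ⟨ja, rfl⟩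
      · exact hax rfl
      rcases adj_mid hyz with rfl | ⟨jz, rfl⟩
      · exact hxz rfl
      simp only [col_mk, Fin.mk.injEq, colVal] at h1 h2
      have := ib.2; have := iy.2; have := ja.2; have := jz.2
      have := Nat.mod_eq_of_lt ib.2; have := Nat.mod_eq_of_lt iy.2
      rcases mod_small_cases (t := t) (a := ib.1 + ja.1 + 1) (by omega) with h' | h' <;>
        rcases mod_small_cases (t := t) (a := iy.1 + jz.1 + 1) (by omega) with h'' | h'' <;>
        omega
    · -- x = some ⟨i, none⟩
      rcases adj_mid ((twoHTree t fun _ => r - 1).adj_symm hbx) with rfl | ⟨jb, rfl⟩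
      · rcases adj_mid hxy with rfl | ⟨jy, rfl⟩
        · exact hby rfl
        · exact hxz (adj_leaf hyz).symm
      · exact hax (adj_leaf ((twoHTree t fun _ => r - 1).adj_symm hab))
    · -- x = leaf
      have hb := adj_leaf ((twoHTree t fun _ => r - 1).adj_symm hbx)
      have hy := adj_leaf hxy
      exact hby (hb.trans hy.symm)

end StarAux

/-- Corollary 6.4, second case. For the `r`-regular 2H-tree `T_{(r,t)}`,
if `t ≥ 2r` then `χ'_s(T_{(r,t)}) = t`. -/
theorem regular_twoHTree_star_eq_of_large_t (r t : ℕ) (hr : 1 ≤ r) (ht : 1 ≤ t)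
    (h : 2 * r ≤ t) :
    starChromaticIndex (twoHTree t (fun _ => r - 1)) = t := by
  have htpos : 0 < t := ht
  have hmem : t ∈ {k : ℕ | ∃ c : Sym2 _ → Fin k,
      IsStarEdgeColoring (twoHTree t (fun _ => r - 1)) c} :=
    ⟨StarAux.col (r := r) htpos, StarAux.isStar hr h htpos⟩
  have hlb : ∀ k ∈ {k : ℕ | ∃ c : Sym2 _ → Fin k,
      IsStarEdgeColoring (twoHTree t (fun _ => r - 1)) c}, t ≤ k := by
    rintro k ⟨c, hproper, -⟩
    have hinj : Function.Injective (fun i : Fin t => c s(none, some ⟨i, none⟩)) := by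
      intro i i' hii
      by_contra hne
      have hadj : ∀ i : Fin t, (twoHTree t (fun _ => r - 1)).Adj none (some ⟨i, none⟩) := by
        intro i
        exact StarAux.adj_iff.mpr (Or.inl ⟨rfl, i, rfl⟩)
      exact hproper (hadj i) (hadj i') (by simp [hne]) hii
    simpa using Fintype.card_le_of_injective _ hinj
  exact le_antisymm (Nat.sInf_le hmem) (le_csInf ⟨t, hmem⟩ hlb)
end
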